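/- arXiv:math/0006048 — 2 statements merged into one kernel-verified Lean document; each statement's English description precedes it below -/
import Mathlib

section
/- Let A be a bialgebra and M, N objects of the category A_{lr}^r (bimodules over A that are simultaneously left-right and right-right Hopf modules). Endow A^n⊗M with the right A-module structure (a^1⊗...⊗a^n⊗m)·b = a^1⊗...⊗a^n⊗(m·b), and N⊗A^p with the right A-module structure (x⊗a^1⊗...⊗a^p)·b = Σ x·b_1 ⊗ a^1 b_2 ⊗...⊗ a^p b_{p+1}. Then the subspaces R^{n,p}(M,N) = Hom_{mod-A}(A^n⊗M, N⊗A^p) of right A-module maps are preserved by the differentials of the Hopf-module bicomplex: d_m^{n,p}(R^{n,p}(M,N)) ⊆ R^{n+1,p}(M,N) and d_c^{n,p}(R^{n,p}(M,N)) ⊆ R^{n,p+1}(M,N), so (R^{n,p}(M,N), d_m, d_c) is a double complex. -/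
open TensorProduct
noncomputable section

namespace PS

variable (k : Type) [Field k] (A : Type) [Ring A] [Bialgebra k A]

/-- Left-nested tensor powers with base `B`: `pwr B n = B ⊗ A ⊗ ⋯ ⊗ A` (`n` copies of `A`). -/
def pwr (B : ModuleCat k) : ℕ → ModuleCat k
  | 0 => B
  | n + 1 => ModuleCat.of k (pwr B n ⊗[k] A)

/-- `A^{⊗ n}` realized as `pwr k n`, i.e. `k ⊗ A ⊗ ⋯ ⊗ A`. -/
abbrev Pk (n : ℕ) : ModuleCat k := pwr k A (ModuleCat.of k k) n

abbrev μA : A ⊗[k] A →ₗ[k] A := LinearMap.mul' k A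
abbrev ΔA : A →ₗ[k] A ⊗[k] A := Coalgebra.comul
abbrev εA : A →ₗ[k] k := Coalgebra.counit

/-- Multiplication of the tensorands in slots `i` and `i+1` (`1 ≤ i ≤ n`);
junk (zero map) for other `i`. -/
def mulP : (n : ℕ) → (i : ℕ) → ((Pk k A (n+1) : Type) →ₗ[k] Pk k A n)
  | 0, _ => 0
  | n + 1, i =>
      if i = n + 1 then
        (TensorProduct.map (LinearMap.id : (Pk k A n : Type) →ₗ[k] Pk k A n) (μA k A)).comp
          (TensorProduct.assoc k (Pk k A n) A A).toLinearMap
      else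
        TensorProduct.map (mulP n i) (LinearMap.id : A →ₗ[k] A)

/-- Insert an `A`-factor at the innermost slot (slot 1). -/
def insP : (n : ℕ) → (A ⊗[k] (Pk k A n : Type)) ≃ₗ[k] (Pk k A (n+1) : Type)
  | 0 => TensorProduct.comm k A k
  | n + 1 =>
      (TensorProduct.assoc k A (Pk k A n) A).symm.trans
        (TensorProduct.congr (insP n) (LinearEquiv.refl k A))

section NM

variable {N : Type} [AddCommGroup N] [Module k N]

/-- The left diagonal action of `A` on `N ⊗ A^{⊗ p}` built from a base action `ωN`. -/
def ldiag (ωN : A ⊗[k] N →ₗ[k] N) :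
    (p : ℕ) → (A ⊗[k] (pwr k A (ModuleCat.of k N) p : Type) →ₗ[k] pwr k A (ModuleCat.of k N) p)
  | 0 => ωN
  | p + 1 =>
      (TensorProduct.map (ldiag ωN p) (μA k A)).comp <|
        ((TensorProduct.tensorTensorTensorComm k A A
            (pwr k A (ModuleCat.of k N) p : Type) A).toLinearMap).comp
          (TensorProduct.map (ΔA k A) (LinearMap.id :
            ((pwr k A (ModuleCat.of k N) p : Type) ⊗[k] A) →ₗ[k] _))

/-- Right diagonal multiplication on the `A`-slots of `N ⊗ A^{⊗ p}` (counit on the base). -/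
def rdiagE : (p : ℕ) →
    ((pwr k A (ModuleCat.of k N) p : Type) ⊗[k] A →ₗ[k] pwr k A (ModuleCat.of k N) p)
  | 0 => (TensorProduct.rid k N).toLinearMap.comp
      (TensorProduct.map (LinearMap.id : N →ₗ[k] N) (εA k A))
  | p + 1 =>
      (TensorProduct.map (rdiagE p) (μA k A)).comp <|
        ((TensorProduct.tensorTensorTensorComm k
            (pwr k A (ModuleCat.of k N) p : Type) A A A).toLinearMap).comp
          (TensorProduct.map
            (LinearMap.id : ((pwr k A (ModuleCat.of k N) p : Type) ⊗[k] A) →ₗ[k] _) (ΔA k A))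

/-- Right diagonal action on `N ⊗ A^{⊗ p}` built from a base (right) action `ωNr`. -/
def rdiagAct (ωNr : N ⊗[k] A →ₗ[k] N) : (p : ℕ) →
    ((pwr k A (ModuleCat.of k N) p : Type) ⊗[k] A →ₗ[k] pwr k A (ModuleCat.of k N) p)
  | 0 => ωNr
  | p + 1 =>
      (TensorProduct.map (rdiagAct ωNr p) (μA k A)).comp <|
        ((TensorProduct.tensorTensorTensorComm k
            (pwr k A (ModuleCat.of k N) p : Type) A A A).toLinearMap).comp
          (TensorProduct.map
            (LinearMap.id : ((pwr k A (ModuleCat.of k N) p : Type) ⊗[k] A) →ₗ[k] _) (ΔA k A))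

end NM

/-- `dL : A^{⊗ n} → A ⊗ A^{⊗ n}`, `a^1 ⊗ ⋯ ⊗ a^n ↦ Σ (a^1)_1 ⋯ (a^n)_1 ⊗ ((a^1)_2 ⊗ ⋯ ⊗ (a^n)_2)`. -/
def dL : (n : ℕ) → ((Pk k A n : Type) →ₗ[k] A ⊗[k] (Pk k A n : Type))
  | 0 => (TensorProduct.map (Algebra.linearMap k A) (LinearMap.id : k →ₗ[k] k)).comp
      (TensorProduct.lid k k).symm.toLinearMap
  | n + 1 =>
      (TensorProduct.map (μA k A)
          (LinearMap.id : ((Pk k A n : Type) ⊗[k] A) →ₗ[k] _)).comp <|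
        ((TensorProduct.tensorTensorTensorComm k A (Pk k A n : Type) A A).toLinearMap).comp
          (TensorProduct.map (dL n) (ΔA k A))

/-- `dR : A^{⊗ n} → A^{⊗ n} ⊗ A`, `a^1 ⊗ ⋯ ⊗ a^n ↦ Σ ((a^1)_1 ⊗ ⋯ ⊗ (a^n)_1) ⊗ (a^1)_2 ⋯ (a^n)_2`. -/
def dR : (n : ℕ) → ((Pk k A n : Type) →ₗ[k] (Pk k A n : Type) ⊗[k] A)
  | 0 => (TensorProduct.map (LinearMap.id : k →ₗ[k] k) (Algebra.linearMap k A)).comp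
      (TensorProduct.rid k k).symm.toLinearMap
  | n + 1 =>
      (TensorProduct.map
          (LinearMap.id : ((Pk k A n : Type) ⊗[k] A) →ₗ[k] _) (μA k A)).comp <|
        ((TensorProduct.tensorTensorTensorComm k (Pk k A n : Type) A A A).toLinearMap).comp
          (TensorProduct.map (dR n) (ΔA k A))

section Base

variable {N : Type} [AddCommGroup N] [Module k N]

/-- Apply `ρN : N → N ⊗ A` to the base of `N ⊗ A^{⊗ p}`. -/
def rhoBase (ρN : N →ₗ[k] N ⊗[k] A) : (p : ℕ) →
    ((pwr k A (ModuleCat.of k N) p : Type) →ₗ[k] pwr k A (ModuleCat.of k (N ⊗[k] A)) p)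
  | 0 => ρN
  | p + 1 => TensorProduct.map (rhoBase ρN p) (LinearMap.id : A →ₗ[k] A)

/-- Reinterpret `(N ⊗ A) ⊗ A^{⊗ p}` as `N ⊗ A^{⊗ (p+1)}`. -/
def shiftB : (p : ℕ) →
    ((pwr k A (ModuleCat.of k (N ⊗[k] A)) p : Type) ≃ₗ[k] pwr k A (ModuleCat.of k N) (p+1))
  | 0 => LinearEquiv.refl k (N ⊗[k] A)
  | p + 1 => TensorProduct.congr (shiftB p) (LinearEquiv.refl k A)

/-- Multiply the `A`-component of the base `N ⊗ A` on the right by an element of `A`. -/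
def rmulBase : (p : ℕ) →
    ((pwr k A (ModuleCat.of k (N ⊗[k] A)) p : Type) ⊗[k] A →ₗ[k]
      pwr k A (ModuleCat.of k (N ⊗[k] A)) p)
  | 0 => (TensorProduct.map (LinearMap.id : N →ₗ[k] N) (μA k A)).comp
      (TensorProduct.assoc k N A A).toLinearMap
  | p + 1 =>
      (TensorProduct.map (rmulBase p) (LinearMap.id : A →ₗ[k] A)).comp <|
        ((TensorProduct.assoc k (pwr k A (ModuleCat.of k (N ⊗[k] A)) p : Type) A A).symm.toLinearMap).comp <|
          (TensorProduct.map
            (LinearMap.id : (pwr k A (ModuleCat.of k (N ⊗[k] A)) p : Type) →ₗ[k] _)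
            (TensorProduct.comm k A A).toLinearMap).comp
            (TensorProduct.assoc k
              (pwr k A (ModuleCat.of k (N ⊗[k] A)) p : Type) A A).toLinearMap

/-- Apply the counit to the `A`-component of the base `N ⊗ A`. -/
def epsBase : (p : ℕ) →
    ((pwr k A (ModuleCat.of k (N ⊗[k] A)) p : Type) →ₗ[k] pwr k A (ModuleCat.of k N) p)
  | 0 => (TensorProduct.rid k N).toLinearMap.comp
      (TensorProduct.map (LinearMap.id : N →ₗ[k] N) (εA k A))
  | p + 1 => TensorProduct.map (epsBase p) (LinearMap.id : A →ₗ[k] A)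

/-- Apply `Δ` on the `i`-th `A`-slot (`1 ≤ i ≤ p`) of `N ⊗ A^{⊗ p}`; junk otherwise. -/
def comulAt : (p : ℕ) → (i : ℕ) →
    ((pwr k A (ModuleCat.of k N) p : Type) →ₗ[k] pwr k A (ModuleCat.of k N) (p+1))
  | 0, _ => 0
  | p + 1, i =>
      if i = p + 1 then
        ((TensorProduct.assoc k (pwr k A (ModuleCat.of k N) p : Type) A A).symm.toLinearMap).comp
          (TensorProduct.map
            (LinearMap.id : (pwr k A (ModuleCat.of k N) p : Type) →ₗ[k] _) (ΔA k A))
      else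
        TensorProduct.map (comulAt p i) (LinearMap.id : A →ₗ[k] A)

/-- Left coaction on `N ⊗ A^{⊗ p}` coming from a left coaction on the base. -/
def lcoBase (ρNl : N →ₗ[k] A ⊗[k] N) : (p : ℕ) →
    ((pwr k A (ModuleCat.of k N) p : Type) →ₗ[k]
      A ⊗[k] (pwr k A (ModuleCat.of k N) p : Type))
  | 0 => ρNl
  | p + 1 =>
      ((TensorProduct.assoc k A (pwr k A (ModuleCat.of k N) p : Type) A).toLinearMap).comp
        (TensorProduct.map (lcoBase ρNl p) (LinearMap.id : A →ₗ[k] A))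

end Base

section Bicomplex

variable {M N : Type} [AddCommGroup M] [Module k M] [AddCommGroup N] [Module k N]

/-- `A^{⊗ n} ⊗ M`, the domain of the `(n,p)` cochains. -/
abbrev Dm (M : Type) [AddCommGroup M] [Module k M] (n : ℕ) : Type :=
  (Pk k A n : Type) ⊗[k] M

/-- `N ⊗ A^{⊗ p}`. -/
abbrev Cd (N : Type) [AddCommGroup N] [Module k N] (p : ℕ) : Type :=
  (pwr k A (ModuleCat.of k N) p : Type)

/-- The space of `(n,p)` cochains `Hom(A^{⊗ n} ⊗ M, N ⊗ A^{⊗ p})`. -/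
abbrev Yc (M N : Type) [AddCommGroup M] [Module k M] [AddCommGroup N] [Module k N]
    (n p : ℕ) : Type := Dm k A M n →ₗ[k] Cd k A N p

variable (ωM : A ⊗[k] M →ₗ[k] M) (ρM : M →ₗ[k] M ⊗[k] A)
variable (ωN : A ⊗[k] N →ₗ[k] N) (ρN : N →ₗ[k] N ⊗[k] A)

/-- `b_0`: the face using the diagonal left action of `a^1` on `N ⊗ A^{⊗ p}`. -/
def face0 (n p : ℕ) (f : Yc k A M N n p) : Yc k A M N (n+1) p :=
  (ldiag k A ωN p).comp <|
    (TensorProduct.map (LinearMap.id : A →ₗ[k] A) f).comp <|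
      ((TensorProduct.assoc k A (Pk k A n : Type) M).toLinearMap).comp
        (TensorProduct.map (insP k A n).symm.toLinearMap (LinearMap.id : M →ₗ[k] M))

/-- `b_i`, `1 ≤ i ≤ n`: multiply the adjacent arguments `a^i a^{i+1}`. -/
def faceMid (n p : ℕ) (i : ℕ) (f : Yc k A M N n p) : Yc k A M N (n+1) p :=
  f.comp (TensorProduct.map (mulP k A n i) (LinearMap.id : M →ₗ[k] M))

/-- `b_{n+1}` in the Hopf-module case: `f(a^1 ⊗ ⋯ ⊗ a^n ⊗ a^{n+1}·m)`. -/
def faceLastH (n p : ℕ) (f : Yc k A M N n p) : Yc k A M N (n+1) p :=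
  f.comp <|
    (TensorProduct.map (LinearMap.id : (Pk k A n : Type) →ₗ[k] _) ωM).comp
      (TensorProduct.assoc k (Pk k A n : Type) A M).toLinearMap

/-- `b_{n+1}` in the Yetter-Drinfel'd case. -/
def faceLastYD (n p : ℕ) (f : Yc k A M N n p) : Yc k A M N (n+1) p :=
  (rdiagE k A p).comp <|
    ((TensorProduct.comm k A (Cd k A N p)).toLinearMap).comp <|
      (TensorProduct.map (LinearMap.id : A →ₗ[k] A)
        (f.comp (TensorProduct.map (LinearMap.id : (Pk k A n : Type) →ₗ[k] _) ωM))).comp <|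
        ((TensorProduct.leftComm k (Pk k A n : Type) A (A ⊗[k] M)).toLinearMap).comp <|
          (TensorProduct.map (LinearMap.id : (Pk k A n : Type) →ₗ[k] _)
            (TensorProduct.assoc k A A M).toLinearMap).comp <|
            ((TensorProduct.assoc k (Pk k A n : Type) (A ⊗[k] A) M).toLinearMap).comp
              (TensorProduct.map
                (TensorProduct.map (LinearMap.id : (Pk k A n : Type) →ₗ[k] _) (ΔA k A))
                (LinearMap.id : M →ₗ[k] M))

/-- The Yetter-Drinfel'd horizontal faces `b_i^{n,p}`, `0 ≤ i ≤ n+1`. -/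
def bYD (n p : ℕ) (i : ℕ) (f : Yc k A M N n p) : Yc k A M N (n+1) p :=
  if i = 0 then face0 k A ωN n p f
  else if i ≤ n then faceMid k A n p i f
  else faceLastYD k A ωM n p f

/-- The Hopf-module horizontal faces `b_i^{n,p}`, `0 ≤ i ≤ n+1`. -/
def bH (n p : ℕ) (i : ℕ) (f : Yc k A M N n p) : Yc k A M N (n+1) p :=
  if i = 0 then face0 k A ωN n p f
  else if i ≤ n then faceMid k A n p i f
  else faceLastH k A ωM n p f

/-- `c_0` in the Hopf-module case: apply `ρ_N` to the `N`-component of the output. -/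
def cof0H (n p : ℕ) (f : Yc k A M N n p) : Yc k A M N n (p+1) :=
  ((shiftB k A p).toLinearMap).comp ((rhoBase k A ρN p).comp f)

/-- `c_0` in the Yetter-Drinfel'd case. -/
def cof0YD (n p : ℕ) (f : Yc k A M N n p) : Yc k A M N n (p+1) :=
  ((shiftB k A p).toLinearMap).comp <|
    (rmulBase k A p).comp <|
      ((TensorProduct.comm k A
          (pwr k A (ModuleCat.of k (N ⊗[k] A)) p : Type)).toLinearMap).comp <|
        (TensorProduct.map (LinearMap.id : A →ₗ[k] A) ((rhoBase k A ρN p).comp f)).comp <|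
          ((TensorProduct.assoc k A (Pk k A n : Type) M).toLinearMap).comp
            (TensorProduct.map (dL k A n) (LinearMap.id : M →ₗ[k] M))

/-- `c_{p+1}`: uses the right comodule structure of `M`. -/
def cofLast (n p : ℕ) (f : Yc k A M N n p) : Yc k A M N n (p+1) :=
  (TensorProduct.map f (μA k A)).comp <|
    ((TensorProduct.tensorTensorTensorComm k (Pk k A n : Type) A M A).toLinearMap).comp
      (TensorProduct.map (dR k A n) ρM)

/-- The Yetter-Drinfel'd vertical cofaces `c_j^{n,p}`, `0 ≤ j ≤ p+1`. -/
def cYD (n p : ℕ) (j : ℕ) (f : Yc k A M N n p) : Yc k A M N n (p+1) :=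
  if j = 0 then cof0YD k A ρN n p f
  else if j ≤ p then (comulAt k A p j).comp f
  else cofLast k A ρM n p f

/-- The Hopf-module vertical cofaces `c_j^{n,p}`, `0 ≤ j ≤ p+1`. -/
def cH (n p : ℕ) (j : ℕ) (f : Yc k A M N n p) : Yc k A M N n (p+1) :=
  if j = 0 then cof0H k A ρN n p f
  else if j ≤ p then (comulAt k A p j).comp f
  else cofLast k A ρM n p f

/-- The horizontal differential (Yetter-Drinfel'd case). -/
def dmYD (n p : ℕ) (f : Yc k A M N n p) : Yc k A M N (n+1) p :=
  ∑ i ∈ Finset.range (n+2), ((-1 : ℤ)^i) • bYD k A ωM ωN n p i f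

/-- The vertical differential (Yetter-Drinfel'd case). -/
def dcYD (n p : ℕ) (f : Yc k A M N n p) : Yc k A M N n (p+1) :=
  ∑ j ∈ Finset.range (p+2), ((-1 : ℤ)^j) • cYD k A ρM ρN n p j f

/-- The horizontal differential (Hopf-module case). -/
def dmH (n p : ℕ) (f : Yc k A M N n p) : Yc k A M N (n+1) p :=
  ∑ i ∈ Finset.range (n+2), ((-1 : ℤ)^i) • bH k A ωM ωN n p i f

/-- The vertical differential (Hopf-module case). -/
def dcH (n p : ℕ) (f : Yc k A M N n p) : Yc k A M N n (p+1) :=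
  ∑ j ∈ Finset.range (p+2), ((-1 : ℤ)^j) • cH k A ρM ρN n p j f

end Bicomplex

section Structures

variable {M : Type} [AddCommGroup M] [Module k M]

/-- `(M, ωM)` is a left `A`-module. -/
def IsModule (ωM : A ⊗[k] M →ₗ[k] M) : Prop :=
  (∀ m : M, ωM ((1 : A) ⊗ₜ m) = m) ∧
  ∀ (a b : A) (m : M), ωM (a ⊗ₜ ωM (b ⊗ₜ m)) = ωM ((a * b) ⊗ₜ m)

/-- `(M, ρM)` is a right `A`-comodule. -/
def IsComodule (ρM : M →ₗ[k] M ⊗[k] A) : Prop :=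
  ((TensorProduct.rid k M).toLinearMap.comp
      ((TensorProduct.map (LinearMap.id : M →ₗ[k] M) (εA k A)).comp ρM) = LinearMap.id) ∧
  (TensorProduct.map ρM (LinearMap.id : A →ₗ[k] A)).comp ρM =
    ((TensorProduct.assoc k M A A).symm.toLinearMap).comp
      ((TensorProduct.map (LinearMap.id : M →ₗ[k] M) (ΔA k A)).comp ρM)

/-- The map `a ⊗ m ↦ Σ a_1·m_0 ⊗ a_2 m_1`. -/
def hopfRHS (ωM : A ⊗[k] M →ₗ[k] M) (ρM : M →ₗ[k] M ⊗[k] A) :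
    A ⊗[k] M →ₗ[k] M ⊗[k] A :=
  (TensorProduct.map ωM (μA k A)).comp <|
    ((TensorProduct.tensorTensorTensorComm k A A M A).toLinearMap).comp
      (TensorProduct.map (ΔA k A) ρM)

/-- The map `a ⊗ m ↦ Σ (a_2·m)_0 ⊗ (a_2·m)_1 a_1`. -/
def ydLHS (ωM : A ⊗[k] M →ₗ[k] M) (ρM : M →ₗ[k] M ⊗[k] A) :
    A ⊗[k] M →ₗ[k] M ⊗[k] A :=
  (TensorProduct.map (LinearMap.id : M →ₗ[k] M) (μA k A)).comp <|
    ((TensorProduct.assoc k M A A).toLinearMap).comp <|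
      ((TensorProduct.comm k A (M ⊗[k] A)).toLinearMap).comp <|
        (TensorProduct.map (LinearMap.id : A →ₗ[k] A) (ρM.comp ωM)).comp <|
          ((TensorProduct.assoc k A A M).toLinearMap).comp
            (TensorProduct.map (ΔA k A) (LinearMap.id : M →ₗ[k] M))

/-- `(M, ωM, ρM)` is a left-right Yetter-Drinfel'd module over `A`. -/
def IsYetterDrinfeld (ωM : A ⊗[k] M →ₗ[k] M) (ρM : M →ₗ[k] M ⊗[k] A) : Prop :=
  IsModule k A ωM ∧ IsComodule k A ρM ∧
    ydLHS k A ωM ρM = hopfRHS k A ωM ρM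

/-- `(M, ωM, ρM)` is a left-right Hopf module over `A`. -/
def IsHopfModule (ωM : A ⊗[k] M →ₗ[k] M) (ρM : M →ₗ[k] M ⊗[k] A) : Prop :=
  IsModule k A ωM ∧ IsComodule k A ρM ∧
    ρM.comp ωM = hopfRHS k A ωM ρM

end Structures


section Bimod

variable (k : Type) [Field k] (A : Type) [Ring A] [Bialgebra k A]
variable {M N : Type} [AddCommGroup M] [Module k M] [AddCommGroup N] [Module k N]

/-- The right `A`-action on `A^{⊗n} ⊗ M`: `(a^1 ⊗ ⋯ ⊗ a^n ⊗ m)·b = a^1 ⊗ ⋯ ⊗ a^n ⊗ m·b`. -/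
def rActDm (ωMr : M ⊗[k] A →ₗ[k] M) (n : ℕ) :
    (Dm k A M n) ⊗[k] A →ₗ[k] Dm k A M n :=
  (TensorProduct.map (LinearMap.id : (Pk k A n : Type) →ₗ[k] _) ωMr).comp
    (TensorProduct.assoc k (Pk k A n : Type) M A).toLinearMap

/-- `f : A^{⊗n} ⊗ M → N ⊗ A^{⊗p}` is right `A`-linear for the structures of the paper
(the diagonal right action `(x ⊗ a^1 ⊗ ⋯ ⊗ a^p)·b = Σ x·b_1 ⊗ a^1 b_2 ⊗ ⋯ ⊗ a^p b_{p+1}`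
on the codomain). -/
def IsRightLinear (ωMr : M ⊗[k] A →ₗ[k] M) (ωNr : N ⊗[k] A →ₗ[k] N) (n p : ℕ)
    (f : Yc k A M N n p) : Prop :=
  f.comp (rActDm k A ωMr n) =
    (rdiagAct k A ωNr p).comp (TensorProduct.map f (LinearMap.id : A →ₗ[k] A))

/-- `(M, ωMr)` is a right `A`-module. -/
def IsModuleR (ωMr : M ⊗[k] A →ₗ[k] M) : Prop :=
  (∀ m : M, ωMr (m ⊗ₜ (1 : A)) = m) ∧
  ∀ (m : M) (a b : A), ωMr (ωMr (m ⊗ₜ a) ⊗ₜ b) = ωMr (m ⊗ₜ (a * b))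

/-- Bimodule compatibility: `(a·m)·b = a·(m·b)`. -/
def IsBimodule (ωM : A ⊗[k] M →ₗ[k] M) (ωMr : M ⊗[k] A →ₗ[k] M) : Prop :=
  ∀ (a b : A) (m : M), ωMr (ωM (a ⊗ₜ m) ⊗ₜ b) = ωM (a ⊗ₜ ωMr (m ⊗ₜ b))

/-- Right-right Hopf-module compatibility: `ρ(m·a) = Σ m_0·a_1 ⊗ m_1 a_2`. -/
def IsHopfRR (ωMr : M ⊗[k] A →ₗ[k] M) (ρM : M →ₗ[k] M ⊗[k] A) : Prop :=
  ρM.comp ωMr =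
    (TensorProduct.map ωMr (μA k A)).comp
      (((TensorProduct.tensorTensorTensorComm k M A A A).toLinearMap).comp
        (TensorProduct.map ρM (ΔA k A)))

/-- `M` is an object of `A_{lr}^r`: a bimodule which is a left-right and a
right-right Hopf module. -/
def IsLRRObject (ωM : A ⊗[k] M →ₗ[k] M) (ωMr : M ⊗[k] A →ₗ[k] M)
    (ρM : M →ₗ[k] M ⊗[k] A) : Prop :=
  IsModule k A ωM ∧ IsModuleR k A ωMr ∧ IsBimodule k A ωM ωMr ∧
    IsComodule k A ρM ∧ ρM.comp ωM = hopfRHS k A ωM ρM ∧ IsHopfRR k A ωMr ρM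

/-- The left `A`-coaction on `A^{⊗n} ⊗ M`:
`a^1 ⊗ ⋯ ⊗ a^n ⊗ m ↦ Σ (a^1)_1 ⋯ (a^n)_1 m_{(-1)} ⊗ (a^1)_2 ⊗ ⋯ ⊗ (a^n)_2 ⊗ m_{(0)}`. -/
def lcoDm (ρMl : M →ₗ[k] A ⊗[k] M) (n : ℕ) :
    Dm k A M n →ₗ[k] A ⊗[k] Dm k A M n :=
  (TensorProduct.map (μA k A)
      (LinearMap.id : ((Pk k A n : Type) ⊗[k] M) →ₗ[k] _)).comp <|
    ((TensorProduct.tensorTensorTensorComm k A (Pk k A n : Type) A M).toLinearMap).comp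
      (TensorProduct.map (dL k A n) ρMl)

/-- `f : A^{⊗n} ⊗ M → N ⊗ A^{⊗p}` is left `A`-colinear for the structures of the paper
(the coaction `x ⊗ a^1 ⊗ ⋯ ⊗ a^p ↦ Σ x_{(-1)} ⊗ x_{(0)} ⊗ a^1 ⊗ ⋯ ⊗ a^p` on the
codomain). -/
def IsLeftColinear (ρMl : M →ₗ[k] A ⊗[k] M) (ρNl : N →ₗ[k] A ⊗[k] N) (n p : ℕ)
    (f : Yc k A M N n p) : Prop :=
  (lcoBase k A ρNl p).comp f =
    (TensorProduct.map (LinearMap.id : A →ₗ[k] A) f).comp (lcoDm k A ρMl n)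

/-- `(M, ρMl)` is a left `A`-comodule. -/
def IsComoduleL (ρMl : M →ₗ[k] A ⊗[k] M) : Prop :=
  ((TensorProduct.lid k M).toLinearMap.comp
      ((TensorProduct.map (εA k A) (LinearMap.id : M →ₗ[k] M)).comp ρMl) =
    LinearMap.id) ∧
  (TensorProduct.map (ΔA k A) (LinearMap.id : M →ₗ[k] M)).comp ρMl =
    ((TensorProduct.assoc k A A M).symm.toLinearMap).comp
      ((TensorProduct.map (LinearMap.id : A →ₗ[k] A) ρMl).comp ρMl)

/-- `M` is an `A`-bicomodule:
`Σ m_{(-1)} ⊗ (m_{(0)})_0 ⊗ (m_{(0)})_1 = Σ (m_0)_{(-1)} ⊗ (m_0)_{(0)} ⊗ m_1`. -/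
def IsBicomodule (ρMl : M →ₗ[k] A ⊗[k] M) (ρM : M →ₗ[k] M ⊗[k] A) : Prop :=
  (TensorProduct.map (LinearMap.id : A →ₗ[k] A) ρM).comp ρMl =
    ((TensorProduct.assoc k A M A).toLinearMap).comp
      ((TensorProduct.map ρMl (LinearMap.id : A →ₗ[k] A)).comp ρM)

/-- Left-left Hopf-module compatibility: `ρ^l(a·m) = Σ a_1 m_{(-1)} ⊗ a_2·m_{(0)}`. -/
def IsHopfLL (ωM : A ⊗[k] M →ₗ[k] M) (ρMl : M →ₗ[k] A ⊗[k] M) : Prop :=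
  ρMl.comp ωM =
    (TensorProduct.map (μA k A) ωM).comp
      (((TensorProduct.tensorTensorTensorComm k A A A M).toLinearMap).comp
        (TensorProduct.map (ΔA k A) ρMl))

/-- Right-left Hopf-module compatibility: `ρ^l(m·a) = Σ m_{(-1)} a_1 ⊗ m_{(0)}·a_2`. -/
def IsHopfRL (ωMr : M ⊗[k] A →ₗ[k] M) (ρMl : M →ₗ[k] A ⊗[k] M) : Prop :=
  ρMl.comp ωMr =
    (TensorProduct.map (μA k A) ωMr).comp
      (((TensorProduct.tensorTensorTensorComm k A M A A).toLinearMap).comp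
        (TensorProduct.map ρMl (ΔA k A)))

/-- `M` is an object of `A_l^{lr}`: a bicomodule which is a left-left and a
left-right Hopf module. -/
def IsLLRObject (ωM : A ⊗[k] M →ₗ[k] M) (ρMl : M →ₗ[k] A ⊗[k] M)
    (ρM : M →ₗ[k] M ⊗[k] A) : Prop :=
  IsModule k A ωM ∧ IsComoduleL k A ρMl ∧ IsComodule k A ρM ∧
    IsBicomodule k A ρMl ρM ∧ IsHopfLL k A ωM ρMl ∧
    ρM.comp ωM = hopfRHS k A ωM ρM

/-- `M` is a Hopf bimodule (two-sided two-cosided Hopf module) over `A`. -/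
def IsHopfBimodule (ωM : A ⊗[k] M →ₗ[k] M) (ωMr : M ⊗[k] A →ₗ[k] M)
    (ρMl : M →ₗ[k] A ⊗[k] M) (ρM : M →ₗ[k] M ⊗[k] A) : Prop :=
  IsModule k A ωM ∧ IsModuleR k A ωMr ∧ IsBimodule k A ωM ωMr ∧
    IsComoduleL k A ρMl ∧ IsComodule k A ρM ∧ IsBicomodule k A ρMl ρM ∧
    IsHopfLL k A ωM ρMl ∧ ρM.comp ωM = hopfRHS k A ωM ρM ∧
    IsHopfRL k A ωMr ρMl ∧ IsHopfRR k A ωMr ρM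

end Bimod

section Lemmas
set_option synthInstance.maxHeartbeats 1000000
set_option maxHeartbeats 1000000
variable {M N : Type} [AddCommGroup M] [Module k M] [AddCommGroup N] [Module k N]

-- pointwise rfl lemmas
lemma rdiagAct_zero (ωNr : N ⊗[k] A →ₗ[k] N) : rdiagAct k A ωNr 0 = ωNr := rfl

lemma rdiagAct_succ_app (ωNr : N ⊗[k] A →ₗ[k] N) (p : ℕ)
    (x : (Cd k A N p) ⊗[k] A) (b : A) :
    rdiagAct k A ωNr (p+1) (x ⊗ₜ[k] b)
    = (TensorProduct.map (rdiagAct k A ωNr p) (μA k A))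
        ((TensorProduct.tensorTensorTensorComm k (Cd k A N p) A A A)
          (x ⊗ₜ[k] (ΔA k A b))) := rfl

lemma ldiag_zero (ωN : A ⊗[k] N →ₗ[k] N) : ldiag k A ωN 0 = ωN := rfl

lemma ldiag_succ_app (ωN : A ⊗[k] N →ₗ[k] N) (p : ℕ)
    (a : A) (x : (Cd k A N p) ⊗[k] A) :
    ldiag k A ωN (p+1) (a ⊗ₜ[k] x)
    = (TensorProduct.map (ldiag k A ωN p) (μA k A))
        ((TensorProduct.tensorTensorTensorComm k A A (Cd k A N p) A)
          ((ΔA k A a) ⊗ₜ[k] x)) := rfl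

lemma ldiag_rdiagAct (ωN : A ⊗[k] N →ₗ[k] N) (ωNr : N ⊗[k] A →ₗ[k] N)
    (hbim : IsBimodule k A ωN ωNr) (p : ℕ) (a : A) (y : Cd k A N p) (b : A) :
    rdiagAct k A ωNr p ((ldiag k A ωN p (a ⊗ₜ[k] y)) ⊗ₜ[k] b)
    = ldiag k A ωN p (a ⊗ₜ[k] (rdiagAct k A ωNr p (y ⊗ₜ[k] b))) := by
  induction p generalizing a b with
  | zero => exact hbim a b y
  | succ p ih =>
      induction y using TensorProduct.induction_on with
      | zero => erw [TensorProduct.tmul_zero, map_zero, TensorProduct.zero_tmul, map_zero]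
      | add u v hu hv =>
          erw [TensorProduct.tmul_add, TensorProduct.add_tmul, map_add, map_add, TensorProduct.add_tmul, map_add, hu, hv, TensorProduct.tmul_add, map_add]
          
      | tmul u t =>
          rw [ldiag_succ_app, rdiagAct_succ_app, rdiagAct_succ_app, ldiag_succ_app]
          generalize ΔA k A a = z
          generalize ΔA k A b = w
          induction z using TensorProduct.induction_on with
          | zero => simp only [TensorProduct.zero_tmul, TensorProduct.tmul_zero, map_zero]; rfl
          | add z1 z2 h1 h2 =>
              simp only [TensorProduct.tmul_add, TensorProduct.add_tmul, map_add] at h1 h2 ⊢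
              rw [h1, h2]
          | tmul a1 a2 =>
              induction w using TensorProduct.induction_on with
              | zero => simp only [TensorProduct.zero_tmul, TensorProduct.tmul_zero, map_zero]; rfl
              | add w1 w2 h1 h2 =>
                  simp only [TensorProduct.tmul_add, TensorProduct.add_tmul, map_add] at h1 h2 ⊢
                  rw [h1, h2]
              | tmul b1 b2 =>
                  simp only [TensorProduct.tensorTensorTensorComm_tmul,
                    TensorProduct.map_tmul, LinearMap.mul'_apply]
                  rw [ih a1 u b1, mul_assoc]

lemma rhoBase_succ_app {N : Type} [AddCommGroup N] [Module k N] (ρN : N →ₗ[k] N ⊗[k] A)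
    (p : ℕ) (x : (pwr k A (ModuleCat.of k N) p : Type)) (t : A) :
    rhoBase k A ρN (p+1) (x ⊗ₜ[k] t) = rhoBase k A ρN p x ⊗ₜ[k] t := rfl

lemma shiftB_succ_app {N : Type} [AddCommGroup N] [Module k N]
    (p : ℕ) (x : (pwr k A (ModuleCat.of k (N ⊗[k] A)) p : Type)) (t : A) :
    shiftB k A (p+1) (x ⊗ₜ[k] t) = shiftB k A p x ⊗ₜ[k] t := rfl

lemma shiftRho_rdiagAct {N : Type} [AddCommGroup N] [Module k N]
    (ωNr : N ⊗[k] A →ₗ[k] N) (ρN : N →ₗ[k] N ⊗[k] A)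
    (hRR : IsHopfRR k A ωNr ρN) (p : ℕ) (y : Cd k A N p) (b : A) :
    shiftB k A p (rhoBase k A ρN p (rdiagAct k A ωNr p (y ⊗ₜ[k] b)))
    = rdiagAct k A ωNr (p+1) ((shiftB k A p (rhoBase k A ρN p y)) ⊗ₜ[k] b) := by
  induction p generalizing b with
  | zero =>
      have h := LinearMap.congr_fun hRR (y ⊗ₜ[k] b)
      simp only [LinearMap.comp_apply, TensorProduct.map_tmul] at h
      erw [rdiagAct_succ_app]
      exact h
  | succ p ih =>
      induction y using TensorProduct.induction_on with
      | zero => erw [map_zero, TensorProduct.zero_tmul]; erw [TensorProduct.zero_tmul, map_zero]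
      | add u v hu hv =>
          erw [TensorProduct.add_tmul, map_add, map_add, map_add, map_add, map_add, hu, hv, TensorProduct.add_tmul, map_add]
          
      | tmul u t =>
          rw [rdiagAct_succ_app, rhoBase_succ_app, shiftB_succ_app, rdiagAct_succ_app]
          generalize ΔA k A b = w
          induction w using TensorProduct.induction_on with
          | zero => simp only [TensorProduct.zero_tmul, TensorProduct.tmul_zero, map_zero]; erw [map_zero]; rfl
          | add w1 w2 h1 h2 =>
              simp only [TensorProduct.tmul_add, TensorProduct.add_tmul, map_add] at h1 h2 ⊢
              erw [map_add, map_add]; rw [h1, h2]; rfl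
          | tmul b1 b2 =>
              simp only [TensorProduct.tensorTensorTensorComm_tmul,
                TensorProduct.map_tmul, LinearMap.mul'_apply]
              rw [rhoBase_succ_app, shiftB_succ_app, ih u b1]

lemma comulAt_zero_eq {N : Type} [AddCommGroup N] [Module k N] (j : ℕ) :
    comulAt k A (N := N) 0 j = 0 := rfl

lemma comulAt_succ_ne {N : Type} [AddCommGroup N] [Module k N] (p j : ℕ) (h : j ≠ p+1) :
    comulAt k A (N := N) (p+1) j
    = TensorProduct.map (comulAt k A p j) (LinearMap.id : A →ₗ[k] A) := by
  rw [comulAt]; exact if_neg h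

lemma comulAt_succ_ne_app {N : Type} [AddCommGroup N] [Module k N] (p j : ℕ)
    (h : j ≠ p+1) (x : Cd k A N p) (c : A) :
    comulAt k A (p+1) j (x ⊗ₜ[k] c) = (comulAt k A p j x) ⊗ₜ[k] c := by
  rw [comulAt_succ_ne k A p j h]
  rfl

lemma comulAt_succ_eq_app {N : Type} [AddCommGroup N] [Module k N] (p : ℕ)
    (x : Cd k A N p) (t : A) :
    comulAt k A (p+1) (p+1) (x ⊗ₜ[k] t)
    = (TensorProduct.assoc k (Cd k A N p) A A).symm (x ⊗ₜ[k] (ΔA k A t)) := by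
  rw [comulAt]; erw [if_pos rfl]
  rfl

/-- Auxiliary map used in the proof of `comulAt_rdiagAct`. -/
def auxL {N : Type} [AddCommGroup N] [Module k N] (ωNr : N ⊗[k] A →ₗ[k] N) (p : ℕ)
    (u : Cd k A N p) :
    (A ⊗[k] A) ⊗[k] (A ⊗[k] (A ⊗[k] A)) →ₗ[k] Cd k A N (p+1+1) :=
  (TensorProduct.assoc k (Cd k A N p) A A).symm.toLinearMap.comp
    ((TensorProduct.map ((rdiagAct k A ωNr p).comp
        (TensorProduct.mk k (Cd k A N p) A u)) (LinearMap.mul' k (A ⊗[k] A))).comp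
      (TensorProduct.leftComm k (A ⊗[k] A) A (A ⊗[k] A)).toLinearMap)

lemma auxL_app {N : Type} [AddCommGroup N] [Module k N] (ωNr : N ⊗[k] A →ₗ[k] N) (p : ℕ)
    (u : Cd k A N p) (s : A ⊗[k] A) (b1 : A) (θ : A ⊗[k] A) :
    auxL k A ωNr p u (s ⊗ₜ[k] (b1 ⊗ₜ[k] θ))
    = (TensorProduct.assoc k (Cd k A N p) A A).symm
        ((rdiagAct k A ωNr p (u ⊗ₜ[k] b1)) ⊗ₜ[k] (s * θ)) := rfl

lemma comulAt_rdiagAct {N : Type} [AddCommGroup N] [Module k N]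
    (ωNr : N ⊗[k] A →ₗ[k] N) (p j : ℕ) (y : Cd k A N p) (b : A) :
    comulAt k A p j (rdiagAct k A ωNr p (y ⊗ₜ[k] b))
    = rdiagAct k A ωNr (p+1) ((comulAt k A p j y) ⊗ₜ[k] b) := by
  induction p generalizing b with
  | zero =>
      rw [comulAt_zero_eq]
      simp only [LinearMap.zero_apply, TensorProduct.zero_tmul, map_zero]
  | succ p ih =>
      induction y using TensorProduct.induction_on with
      | zero => erw [map_zero, TensorProduct.zero_tmul]; erw [TensorProduct.zero_tmul, map_zero]; rfl
      | add u v hu hv =>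
          erw [TensorProduct.add_tmul, map_add, map_add, map_add, hu, hv, TensorProduct.add_tmul, map_add]
          
      | tmul u t =>
          by_cases hj : j = p+1
          · subst hj
            rw [rdiagAct_succ_app, comulAt_succ_eq_app]; erw [rdiagAct_succ_app k A ωNr (p+1) ((TensorProduct.assoc k (Cd k A N p) A A).symm (u ⊗ₜ[k] (ΔA k A t))) b]
            have hL : comulAt k A (p+1) (p+1)
                ((TensorProduct.map (rdiagAct k A ωNr p) (μA k A))
                  ((TensorProduct.tensorTensorTensorComm k (Cd k A N p) A A A)
                    ((u ⊗ₜ[k] t) ⊗ₜ[k] (ΔA k A b))))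
                = auxL k A ωNr p u
                    ((ΔA k A t) ⊗ₜ[k] (LinearMap.lTensor A (ΔA k A) (ΔA k A b))) := by
              generalize ΔA k A b = w
              induction w using TensorProduct.induction_on with
              | zero => simp only [TensorProduct.tmul_zero, map_zero]; exact map_zero _
              | add w1 w2 h1 h2 =>
                  simp only [TensorProduct.tmul_add, map_add] at h1 h2 ⊢
                  exact (map_add _ _ _).trans (congrArg₂ (· + ·) h1 h2)
              | tmul b1 b2 =>
                  simp only [TensorProduct.tensorTensorTensorComm_tmul,
                    TensorProduct.map_tmul, LinearMap.mul'_apply,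
                    LinearMap.lTensor_tmul]
                  rw [comulAt_succ_eq_app, auxL_app, Bialgebra.comul_mul]
            have hR : (TensorProduct.map (rdiagAct k A ωNr (p+1)) (μA k A))
                  ((TensorProduct.tensorTensorTensorComm k (Cd k A N (p+1)) A A A)
                    (((TensorProduct.assoc k (Cd k A N p) A A).symm
                        (u ⊗ₜ[k] (ΔA k A t))) ⊗ₜ[k] (ΔA k A b)))
                = auxL k A ωNr p u ((ΔA k A t) ⊗ₜ[k]
                    ((TensorProduct.assoc k A A A)
                      (LinearMap.rTensor A (ΔA k A) (ΔA k A b)))) := by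
              generalize ΔA k A t = s
              generalize ΔA k A b = w
              induction w using TensorProduct.induction_on with
              | zero => erw [TensorProduct.tmul_zero, map_zero]
              | add w1 w2 h1 h2 =>
                  simp only [TensorProduct.tmul_add, map_add] at h1 h2 ⊢
                  erw [TensorProduct.tmul_add, map_add, map_add, h1, h2]; rfl
              | tmul B1 B2 =>
                  induction s using TensorProduct.induction_on with
                  | zero => simp only [TensorProduct.tmul_zero, TensorProduct.zero_tmul,
                      map_zero]; erw [TensorProduct.zero_tmul, map_zero]; rfl
                  | add s1 s2 h1 h2 =>
                      simp only [TensorProduct.tmul_add, TensorProduct.add_tmul,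
                        map_add] at h1 h2 ⊢
                      exact (congrArg (TensorProduct.map (rdiagAct k A ωNr (p+1)) (μA k A)) ((congrArg (TensorProduct.tensorTensorTensorComm k (Cd k A N (p+1)) A A A) (TensorProduct.add_tmul _ _ _)).trans (map_add _ _ _))).trans ((map_add _ _ _).trans (congrArg₂ (· + ·) h1 h2))
                  | tmul s1 s2 =>
                      simp only [TensorProduct.assoc_symm_tmul, LinearEquiv.coe_coe,
                        TensorProduct.tensorTensorTensorComm_tmul, TensorProduct.map_tmul,
                        LinearMap.mul'_apply, LinearMap.rTensor_tmul]
                      erw [TensorProduct.tensorTensorTensorComm_tmul, TensorProduct.map_tmul, rdiagAct_succ_app]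
                      generalize ΔA k A B1 = z
                      induction z using TensorProduct.induction_on with
                      | zero => simp only [TensorProduct.tmul_zero, TensorProduct.zero_tmul,
                          map_zero]; exact TensorProduct.zero_tmul _ _
                      | add z1 z2 h1 h2 =>
                          simp only [TensorProduct.tmul_add, TensorProduct.add_tmul,
                            map_add] at h1 h2 ⊢
                          exact (TensorProduct.add_tmul _ _ _).trans (congrArg₂ (· + ·) h1 h2)
                      | tmul z1 z2 =>
                          rw [show (TensorProduct.assoc k A A A) ((z1 ⊗ₜ[k] z2) ⊗ₜ[k] B2)
                              = z1 ⊗ₜ[k] (z2 ⊗ₜ[k] B2) from rfl, auxL_app]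
                          simp only [TensorProduct.tensorTensorTensorComm_tmul,
                            TensorProduct.map_tmul, LinearMap.mul'_apply,
                            Algebra.TensorProduct.tmul_mul_tmul,
                            TensorProduct.assoc_symm_tmul, LinearEquiv.coe_coe]; rfl
            rw [hL, hR]
            have hco := LinearMap.congr_fun (Coalgebra.coassoc (R := k) (A := A)) b
            simp only [LinearMap.comp_apply, LinearEquiv.coe_coe] at hco
            rw [hco]
          · rw [comulAt_succ_ne_app k A p j hj, rdiagAct_succ_app, rdiagAct_succ_app]
            generalize ΔA k A b = w
            induction w using TensorProduct.induction_on with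
            | zero => simp only [TensorProduct.tmul_zero, map_zero]; erw [map_zero]; rfl
            | add w1 w2 h1 h2 =>
                simp only [TensorProduct.tmul_add, map_add] at h1 h2 ⊢
                erw [map_add]; rw [h1, h2]; rfl
            | tmul b1 b2 =>
                simp only [TensorProduct.tensorTensorTensorComm_tmul,
                  TensorProduct.map_tmul, LinearMap.mul'_apply, LinearMap.id_apply]
                rw [comulAt_succ_ne_app k A p j hj, ih u b1]

end Lemmas
section Faces
variable {M N : Type} [AddCommGroup M] [Module k M] [AddCommGroup N] [Module k N]
variable (ωM : A ⊗[k] M →ₗ[k] M) (ωMr : M ⊗[k] A →ₗ[k] M) (ρM : M →ₗ[k] M ⊗[k] A)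
variable (ωN : A ⊗[k] N →ₗ[k] N) (ωNr : N ⊗[k] A →ₗ[k] N) (ρN : N →ₗ[k] N ⊗[k] A)

lemma isRightLinear_apply {n p : ℕ} {f : Yc k A M N n p}
    (hf : IsRightLinear k A ωMr ωNr n p f) (u : (Pk k A n : Type)) (m : M) (b : A) :
    f (u ⊗ₜ[k] ωMr (m ⊗ₜ[k] b)) = rdiagAct k A ωNr p (f (u ⊗ₜ[k] m) ⊗ₜ[k] b) := by
  have h := LinearMap.congr_fun hf ((u ⊗ₜ[k] m) ⊗ₜ[k] b)
  simp only [LinearMap.comp_apply, rActDm, TensorProduct.map_tmul,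
    LinearMap.id_apply, LinearEquiv.coe_coe, TensorProduct.assoc_tmul] at h
  exact h

lemma face0_rightLinear (hbimN : IsBimodule k A ωN ωNr) (n p : ℕ) (f : Yc k A M N n p)
    (hf : IsRightLinear k A ωMr ωNr n p f) :
    IsRightLinear k A ωMr ωNr (n+1) p (face0 k A ωN n p f) := by
  unfold IsRightLinear
  ext w m b
  show ldiag k A ωN p ((TensorProduct.map (LinearMap.id : A →ₗ[k] A) f)
        ((TensorProduct.assoc k A (Pk k A n : Type) M)
          ((insP k A n).symm w ⊗ₜ[k] ωMr (m ⊗ₜ[k] b))))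
    = rdiagAct k A ωNr p
        ((ldiag k A ωN p ((TensorProduct.map (LinearMap.id : A →ₗ[k] A) f)
          ((TensorProduct.assoc k A (Pk k A n : Type) M)
            ((insP k A n).symm w ⊗ₜ[k] m)))) ⊗ₜ[k] b)
  have hred : ∀ (c : A) (v : (Pk k A n : Type)) (x : M),
      (TensorProduct.map (LinearMap.id : A →ₗ[k] A) f)
        ((TensorProduct.assoc k A (Pk k A n : Type) M) ((c ⊗ₜ[k] v) ⊗ₜ[k] x))
      = c ⊗ₜ[k] f (v ⊗ₜ[k] x) := fun _ _ _ => rfl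
  generalize (insP k A n).symm w = z
  induction z using TensorProduct.induction_on with
  | zero => simp only [TensorProduct.zero_tmul, map_zero]
  | add z1 z2 h1 h2 =>
      simp only [TensorProduct.add_tmul, map_add] at h1 h2 ⊢
      rw [h1, h2]
  | tmul c v =>
      rw [hred, hred, isRightLinear_apply k A ωMr ωNr hf v m b]
      exact (ldiag_rdiagAct k A ωN ωNr hbimN p c (f (v ⊗ₜ[k] m)) b).symm

lemma faceMid_rightLinear (n p i : ℕ) (f : Yc k A M N n p)
    (hf : IsRightLinear k A ωMr ωNr n p f) :
    IsRightLinear k A ωMr ωNr (n+1) p (faceMid k A n p i f) := by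
  unfold IsRightLinear
  ext w m b
  show f ((mulP k A n i w) ⊗ₜ[k] ωMr (m ⊗ₜ[k] b))
    = rdiagAct k A ωNr p ((f ((mulP k A n i w) ⊗ₜ[k] m)) ⊗ₜ[k] b)
  exact isRightLinear_apply k A ωMr ωNr hf (mulP k A n i w) m b

lemma faceLastH_rightLinear (hbimM : IsBimodule k A ωM ωMr) (n p : ℕ) (f : Yc k A M N n p)
    (hf : IsRightLinear k A ωMr ωNr n p f) :
    IsRightLinear k A ωMr ωNr (n+1) p (faceLastH k A ωM n p f) := by
  unfold IsRightLinear
  ext w m b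
  show f ((TensorProduct.map (LinearMap.id : (Pk k A n : Type) →ₗ[k] _) ωM)
        ((TensorProduct.assoc k (Pk k A n : Type) A M) (w ⊗ₜ[k] ωMr (m ⊗ₜ[k] b))))
    = rdiagAct k A ωNr p ((f ((TensorProduct.map (LinearMap.id : (Pk k A n : Type) →ₗ[k] _) ωM)
        ((TensorProduct.assoc k (Pk k A n : Type) A M) (w ⊗ₜ[k] m)))) ⊗ₜ[k] b)
  have hred : ∀ (u : (Pk k A n : Type)) (a : A) (x : M),
      (TensorProduct.map (LinearMap.id : (Pk k A n : Type) →ₗ[k] _) ωM)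
        ((TensorProduct.assoc k (Pk k A n : Type) A M) ((u ⊗ₜ[k] a) ⊗ₜ[k] x))
      = u ⊗ₜ[k] ωM (a ⊗ₜ[k] x) := fun _ _ _ => rfl
  induction w using TensorProduct.induction_on with
  | zero => simp only [TensorProduct.zero_tmul, map_zero]
  | add w1 w2 h1 h2 =>
      simp only [TensorProduct.add_tmul, map_add] at h1 h2 ⊢
      rw [h1, h2]
  | tmul u a =>
      rw [hred, hred, ← hbimM a b m, isRightLinear_apply k A ωMr ωNr hf u (ωM (a ⊗ₜ[k] m)) b]

lemma cof0H_rightLinear (hRRN : IsHopfRR k A ωNr ρN) (n p : ℕ) (f : Yc k A M N n p)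
    (hf : IsRightLinear k A ωMr ωNr n p f) :
    IsRightLinear k A ωMr ωNr n (p+1) (cof0H k A ρN n p f) := by
  unfold IsRightLinear
  ext u m b
  show shiftB k A p (rhoBase k A ρN p (f (u ⊗ₜ[k] ωMr (m ⊗ₜ[k] b))))
    = rdiagAct k A ωNr (p+1) ((shiftB k A p (rhoBase k A ρN p (f (u ⊗ₜ[k] m)))) ⊗ₜ[k] b)
  rw [isRightLinear_apply k A ωMr ωNr hf u m b]
  exact shiftRho_rdiagAct k A ωNr ρN hRRN p (f (u ⊗ₜ[k] m)) b

lemma cMid_rightLinear (n p j : ℕ) (f : Yc k A M N n p)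
    (hf : IsRightLinear k A ωMr ωNr n p f) :
    IsRightLinear k A ωMr ωNr n (p+1) ((comulAt k A p j).comp f) := by
  unfold IsRightLinear
  ext u m b
  show comulAt k A p j (f (u ⊗ₜ[k] ωMr (m ⊗ₜ[k] b)))
    = rdiagAct k A ωNr (p+1) ((comulAt k A p j (f (u ⊗ₜ[k] m))) ⊗ₜ[k] b)
  rw [isRightLinear_apply k A ωMr ωNr hf u m b]
  exact comulAt_rdiagAct k A ωNr p j (f (u ⊗ₜ[k] m)) b

lemma cofLast_rightLinear (hRRM : IsHopfRR k A ωMr ρM) (n p : ℕ) (f : Yc k A M N n p)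
    (hf : IsRightLinear k A ωMr ωNr n p f) :
    IsRightLinear k A ωMr ωNr n (p+1) (cofLast k A ρM n p f) := by
  have hρ : ∀ (m : M) (b : A), ρM (ωMr (m ⊗ₜ[k] b))
      = (TensorProduct.map ωMr (μA k A))
          ((TensorProduct.tensorTensorTensorComm k M A A A) ((ρM m) ⊗ₜ[k] (ΔA k A b))) := by
    intro m b
    have h := LinearMap.congr_fun hRRM (m ⊗ₜ[k] b)
    simp only [LinearMap.comp_apply, TensorProduct.map_tmul, LinearEquiv.coe_coe] at h
    exact h
  unfold IsRightLinear
  ext u m b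
  show (TensorProduct.map f (μA k A))
        ((TensorProduct.tensorTensorTensorComm k (Pk k A n : Type) A M A)
          ((dR k A n u) ⊗ₜ[k] (ρM (ωMr (m ⊗ₜ[k] b)))))
    = rdiagAct k A ωNr (p+1) (((TensorProduct.map f (μA k A))
        ((TensorProduct.tensorTensorTensorComm k (Pk k A n : Type) A M A)
          ((dR k A n u) ⊗ₜ[k] (ρM m)))) ⊗ₜ[k] b)
  rw [hρ m b, rdiagAct_succ_app]
  generalize dR k A n u = U
  generalize ρM m = V
  generalize ΔA k A b = w
  induction U using TensorProduct.induction_on with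
  | zero => simp only [TensorProduct.zero_tmul, map_zero]
  | add U1 U2 h1 h2 =>
      simp only [TensorProduct.add_tmul, map_add] at h1 h2 ⊢
      rw [h1, h2]
  | tmul u1 u2 =>
      induction V using TensorProduct.induction_on with
      | zero => simp only [TensorProduct.zero_tmul, TensorProduct.tmul_zero, map_zero]
      | add V1 V2 h1 h2 =>
          simp only [TensorProduct.add_tmul, TensorProduct.tmul_add, map_add] at h1 h2 ⊢
          rw [h1, h2]
      | tmul m0 m1 =>
          induction w using TensorProduct.induction_on with
          | zero => simp only [TensorProduct.zero_tmul, TensorProduct.tmul_zero, map_zero]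
          | add w1 w2 h1 h2 =>
              simp only [TensorProduct.add_tmul, TensorProduct.tmul_add, map_add] at h1 h2 ⊢
              rw [h1, h2]
          | tmul b1 b2 =>
              simp only [TensorProduct.tensorTensorTensorComm_tmul, TensorProduct.map_tmul,
                LinearMap.mul'_apply]
              rw [isRightLinear_apply k A ωMr ωNr hf u1 m0 b1, mul_assoc]

lemma isRightLinear_zero (n p : ℕ) :
    IsRightLinear k A ωMr ωNr n p (0 : Yc k A M N n p) := by
  unfold IsRightLinear
  ext w m b
  show (0 : Cd k A N p) = rdiagAct k A ωNr p ((0 : Cd k A N p) ⊗ₜ[k] b)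
  simp only [TensorProduct.zero_tmul, map_zero]

lemma isRightLinear_add (n p : ℕ) (f g : Yc k A M N n p)
    (hf : IsRightLinear k A ωMr ωNr n p f) (hg : IsRightLinear k A ωMr ωNr n p g) :
    IsRightLinear k A ωMr ωNr n p (f + g) := by
  unfold IsRightLinear
  ext w m b
  show f (w ⊗ₜ[k] ωMr (m ⊗ₜ[k] b)) + g (w ⊗ₜ[k] ωMr (m ⊗ₜ[k] b))
    = rdiagAct k A ωNr p ((f (w ⊗ₜ[k] m) + g (w ⊗ₜ[k] m)) ⊗ₜ[k] b)
  rw [isRightLinear_apply k A ωMr ωNr hf w m b, isRightLinear_apply k A ωMr ωNr hg w m b,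
    TensorProduct.add_tmul, map_add]

lemma isRightLinear_zsmul (n p : ℕ) (c : ℤ) (f : Yc k A M N n p)
    (hf : IsRightLinear k A ωMr ωNr n p f) :
    IsRightLinear k A ωMr ωNr n p (c • f) := by
  unfold IsRightLinear
  ext w m b
  show c • f (w ⊗ₜ[k] ωMr (m ⊗ₜ[k] b))
    = rdiagAct k A ωNr p ((c • f (w ⊗ₜ[k] m)) ⊗ₜ[k] b)
  have hz : (c • f (w ⊗ₜ[k] m)) ⊗ₜ[k] b = c • (f (w ⊗ₜ[k] m) ⊗ₜ[k] b) :=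
    map_zsmul ((TensorProduct.mk k (Cd k A N p) A).flip b) c (f (w ⊗ₜ[k] m))
  rw [isRightLinear_apply k A ωMr ωNr hf w m b, hz, map_zsmul]

lemma isRightLinear_sum (n p : ℕ) {ι : Type} (s : Finset ι) (g : ι → Yc k A M N n p)
    (hg : ∀ i ∈ s, IsRightLinear k A ωMr ωNr n p (g i)) :
    IsRightLinear k A ωMr ωNr n p (∑ i ∈ s, g i) :=
  Finset.sum_induction g _ (isRightLinear_add k A ωMr ωNr n p)
    (isRightLinear_zero k A ωMr ωNr n p) hg

end Faces

/-- For `M, N` in `A_{lr}^r`, the subspaces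
`R^{n,p}(M,N) = Hom_{mod-A}(A^{⊗n} ⊗ M, N ⊗ A^{⊗p})` of right `A`-linear maps are
preserved by the differentials of the Hopf-module bicomplex, so
`(R^{n,p}(M,N), d_m, d_c)` is a double complex. -/
theorem right_linear_preserved (k : Type) [Field k] (A : Type) [Ring A] [Bialgebra k A]
    (M N : Type) [AddCommGroup M] [Module k M] [AddCommGroup N] [Module k N]
    (ωM : A ⊗[k] M →ₗ[k] M) (ωMr : M ⊗[k] A →ₗ[k] M) (ρM : M →ₗ[k] M ⊗[k] A)
    (ωN : A ⊗[k] N →ₗ[k] N) (ωNr : N ⊗[k] A →ₗ[k] N) (ρN : N →ₗ[k] N ⊗[k] A)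
    (hM : IsLRRObject k A ωM ωMr ρM) (hN : IsLRRObject k A ωN ωNr ρN)
    (n p : ℕ) (f : Yc k A M N n p)
    (hf : IsRightLinear k A ωMr ωNr n p f) :
    IsRightLinear k A ωMr ωNr (n+1) p (dmH k A ωM ωN n p f) ∧
    IsRightLinear k A ωMr ωNr n (p+1) (dcH k A ρM ρN n p f) := by
  constructor
  · unfold dmH
    refine isRightLinear_sum k A ωMr ωNr (n+1) p _ _ ?_
    intro i _
    refine isRightLinear_zsmul k A ωMr ωNr (n+1) p _ _ ?_
    unfold bH
    split_ifs with h1 h2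
    · exact face0_rightLinear k A ωMr ωN ωNr hN.2.2.1 n p f hf
    · exact faceMid_rightLinear k A ωMr ωNr n p i f hf
    · exact faceLastH_rightLinear k A ωM ωMr ωNr hM.2.2.1 n p f hf
  · unfold dcH
    refine isRightLinear_sum k A ωMr ωNr n (p+1) _ _ ?_
    intro j _
    refine isRightLinear_zsmul k A ωMr ωNr n (p+1) _ _ ?_
    unfold cH
    split_ifs with h1 h2
    · exact cof0H_rightLinear k A ωMr ωNr ρN hN.2.2.2.2.2 n p f hf
    · exact cMid_rightLinear k A ωMr ωNr n p j f hf
    · exact cofLast_rightLinear k A ωMr ρM ωNr hM.2.2.2.2.2 n p f hf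

end PS
end
end

section
/- Let A be a bialgebra and M, N objects of the category A_l^{lr} (bicomodules over A that are simultaneously left-left and left-right Hopf modules). Endow A^n⊗M with the left A-comodule structure a^1⊗...⊗a^n⊗m ↦ Σ (a^1)_1...(a^n)_1 m_{(-1)} ⊗ (a^1)_2⊗...⊗(a^n)_2⊗m_{(0)}, and N⊗A^p with the left A-comodule structure x⊗a^1⊗...⊗a^p ↦ Σ x_{(-1)} ⊗ x_{(0)}⊗a^1⊗...⊗a^p. Then the subspaces L^{n,p}(M,N) = Hom^{A-comod}(A^n⊗M, N⊗A^p) of left A-comodule maps are preserved by the Hopf-module bicomplex differentials: d_m(L^{n,p}) ⊆ L^{n+1,p} and d_c(L^{n,p}) ⊆ L^{n,p+1}, so (L^{n,p}(M,N), d_m, d_c) is a double complex. -/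
open TensorProduct
noncomputable section

namespace PS

variable (k : Type) [Field k] (A : Type) [Ring A] [Bialgebra k A]

set_option maxHeartbeats 1600000
set_option synthInstance.maxHeartbeats 400000
set_option linter.dupNamespace false

section Kit
variable {M N P Q M' N' P' Q' : Type}
  [AddCommMonoid M] [Module k M] [AddCommMonoid N] [Module k N]
  [AddCommMonoid P] [Module k P] [AddCommMonoid Q] [Module k Q]
  [AddCommMonoid M'] [Module k M'] [AddCommMonoid N'] [Module k N']
  [AddCommMonoid P'] [Module k P'] [AddCommMonoid Q'] [Module k Q']
variable {k A}

lemma pwML (f : N →ₗ[k] P) (g : M →ₗ[k] N) (h : M' →ₗ[k] N') (t : M ⊗[k] M') :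
    (TensorProduct.map f LinearMap.id) ((TensorProduct.map g h) t)
      = (TensorProduct.map (f.comp g) h) t := by
  induction t using TensorProduct.induction_on with
  | zero => simp
  | tmul x y => simp
  | add u v hu hv => simp_all [map_add]

lemma pwMR (f : N' →ₗ[k] P') (g : M →ₗ[k] N) (h : M' →ₗ[k] N') (t : M ⊗[k] M') :
    (TensorProduct.map LinearMap.id f) ((TensorProduct.map g h) t)
      = (TensorProduct.map g (f.comp h)) t := by
  induction t using TensorProduct.induction_on with
  | zero => simp
  | tmul x y => simp
  | add u v hu hv => simp_all [map_add]

lemma pwC (f : M →ₗ[k] N) (g : M' →ₗ[k] N') (t : M ⊗[k] M') :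
    (TensorProduct.map f LinearMap.id) ((TensorProduct.map LinearMap.id g) t)
      = (TensorProduct.map f g) t := by
  induction t using TensorProduct.induction_on with
  | zero => simp
  | tmul x y => simp
  | add u v hu hv => simp_all [map_add]

lemma pwC' (f : M →ₗ[k] N) (g : M' →ₗ[k] N') (t : M ⊗[k] M') :
    (TensorProduct.map LinearMap.id g) ((TensorProduct.map f LinearMap.id) t)
      = (TensorProduct.map f g) t := by
  induction t using TensorProduct.induction_on with
  | zero => simp
  | tmul x y => simp
  | add u v hu hv => simp_all [map_add]

lemma pwSL (f : N →ₗ[k] P) (g : M →ₗ[k] N) (h : M' →ₗ[k] N') (t : M ⊗[k] M') :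
    (TensorProduct.map (f.comp g) h) t
      = (TensorProduct.map f h) ((TensorProduct.map g LinearMap.id) t) := by
  induction t using TensorProduct.induction_on with
  | zero => simp
  | tmul x y => simp
  | add u v hu hv => simp_all [map_add]

lemma pwSR (f : M →ₗ[k] N) (g : N' →ₗ[k] P') (h : M' →ₗ[k] N') (t : M ⊗[k] M') :
    (TensorProduct.map f (g.comp h)) t
      = (TensorProduct.map f g) ((TensorProduct.map LinearMap.id h) t) := by
  induction t using TensorProduct.induction_on with
  | zero => simp
  | tmul x y => simp
  | add u v hu hv => simp_all [map_add]

lemma pwT1 (f : M →ₗ[k] M') (g : P →ₗ[k] P') (t : (M ⊗[k] N) ⊗[k] (P ⊗[k] Q)) :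
    (TensorProduct.map (TensorProduct.map f g) LinearMap.id)
        ((TensorProduct.tensorTensorTensorComm k M N P Q) t)
      = (TensorProduct.tensorTensorTensorComm k M' N P' Q)
        ((TensorProduct.map (TensorProduct.map f LinearMap.id)
          (TensorProduct.map g LinearMap.id)) t) := by
  induction t using TensorProduct.induction_on with
  | zero => simp
  | tmul x y =>
    induction x using TensorProduct.induction_on with
    | zero => simp
    | tmul x1 x2 =>
      induction y using TensorProduct.induction_on with
      | zero => simp
      | tmul y1 y2 => simp
      | add u v hu hv => simp_all [tmul_add, map_add]
    | add u v hu hv => simp_all [add_tmul, map_add]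
  | add u v hu hv => simp_all [map_add]

lemma pwT2 (f : N →ₗ[k] N') (g : Q →ₗ[k] Q') (t : (M ⊗[k] N) ⊗[k] (P ⊗[k] Q)) :
    (TensorProduct.map LinearMap.id (TensorProduct.map f g))
        ((TensorProduct.tensorTensorTensorComm k M N P Q) t)
      = (TensorProduct.tensorTensorTensorComm k M N' P Q')
        ((TensorProduct.map (TensorProduct.map LinearMap.id f)
          (TensorProduct.map LinearMap.id g)) t) := by
  induction t using TensorProduct.induction_on with
  | zero => simp
  | tmul x y =>
    induction x using TensorProduct.induction_on with
    | zero => simp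
    | tmul x1 x2 =>
      induction y using TensorProduct.induction_on with
      | zero => simp
      | tmul y1 y2 => simp
      | add u v hu hv => simp_all [tmul_add, map_add]
    | add u v hu hv => simp_all [add_tmul, map_add]
  | add u v hu hv => simp_all [map_add]

end Kit

section Gen
variable {X Y Z V X' Y' : Type}
  [AddCommGroup X] [Module k X] [AddCommGroup Y] [Module k Y]
  [AddCommGroup Z] [Module k Z] [AddCommGroup V] [Module k V]
  [AddCommGroup X'] [Module k X'] [AddCommGroup Y'] [Module k Y']

/-- `f` is a morphism of left `A`-comodules for the coactions `lX`, `lY`. -/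
def Colin (lX : X →ₗ[k] A ⊗[k] X) (lY : Y →ₗ[k] A ⊗[k] Y) (f : X →ₗ[k] Y) : Prop :=
  lY.comp f = (TensorProduct.map LinearMap.id f).comp lX

/-- The tensor-product (codiagonal) left coaction. -/
def tco (lX : X →ₗ[k] A ⊗[k] X) (lY : Y →ₗ[k] A ⊗[k] Y) :
    X ⊗[k] Y →ₗ[k] A ⊗[k] (X ⊗[k] Y) :=
  (TensorProduct.map (μA k A) LinearMap.id).comp <|
    ((TensorProduct.tensorTensorTensorComm k A X A Y).toLinearMap).comp
      (TensorProduct.map lX lY)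

/-- The tensor-product right coaction. -/
def rcoT (rX : X →ₗ[k] X ⊗[k] A) (rY : Y →ₗ[k] Y ⊗[k] A) :
    X ⊗[k] Y →ₗ[k] (X ⊗[k] Y) ⊗[k] A :=
  (TensorProduct.map LinearMap.id (μA k A)).comp <|
    ((TensorProduct.tensorTensorTensorComm k X A Y A).toLinearMap).comp
      (TensorProduct.map rX rY)

/-- bicomodule compatibility of a left and a right coaction -/
def Bico (lX : X →ₗ[k] A ⊗[k] X) (rX : X →ₗ[k] X ⊗[k] A) : Prop :=
  (TensorProduct.map lX LinearMap.id).comp rX =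
    ((TensorProduct.assoc k A X A).symm.toLinearMap).comp
      ((TensorProduct.map LinearMap.id rX).comp lX)

variable {k A}
variable {lX : X →ₗ[k] A ⊗[k] X} {lY : Y →ₗ[k] A ⊗[k] Y} {lZ : Z →ₗ[k] A ⊗[k] Z}
variable {lX' : X' →ₗ[k] A ⊗[k] X'} {lY' : Y' →ₗ[k] A ⊗[k] Y'}

lemma Colin.lid : Colin k A lX lX LinearMap.id := by
  simp [Colin, TensorProduct.map_id]

lemma Colin.zero : Colin k A lX lY 0 := by
  unfold Colin; ext x; simp

lemma Colin.comp {f : X →ₗ[k] Y} {g : Y →ₗ[k] Z} (hf : Colin k A lX lY f)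
    (hg : Colin k A lY lZ g) : Colin k A lX lZ (g.comp f) := by
  unfold Colin at *
  rw [← LinearMap.comp_assoc, hg, LinearMap.comp_assoc, hf, ← LinearMap.comp_assoc,
    ← TensorProduct.map_comp, LinearMap.id_comp]

lemma Colin.add {f g : X →ₗ[k] Y} (hf : Colin k A lX lY f) (hg : Colin k A lX lY g) :
    Colin k A lX lY (f + g) := by
  unfold Colin at *
  ext x
  have h1 := LinearMap.congr_fun hf x
  have h2 := LinearMap.congr_fun hg x
  simp only [LinearMap.comp_apply, LinearMap.add_apply, map_add] at *
  rw [h1, h2]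
  have : ∀ t : A ⊗[k] X, (TensorProduct.map (LinearMap.id) (f + g)) t
      = (TensorProduct.map LinearMap.id f) t + (TensorProduct.map LinearMap.id g) t := by
    intro t
    induction t using TensorProduct.induction_on with
    | zero => simp
    | tmul a x => simp [TensorProduct.tmul_add]
    | add u v hu hv => simp_all [map_add]; abel
  rw [this]

lemma Colin.zsmul {f : X →ₗ[k] Y} (z : ℤ) (hf : Colin k A lX lY f) :
    Colin k A lX lY (z • f) := by
  unfold Colin at *
  ext x
  have h1 := LinearMap.congr_fun hf x
  simp only [LinearMap.comp_apply, LinearMap.smul_apply, map_zsmul] at *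
  rw [h1]
  have : ∀ t : A ⊗[k] X, (TensorProduct.map (LinearMap.id) (z • f)) t
      = z • (TensorProduct.map LinearMap.id f) t := by
    intro t
    induction t using TensorProduct.induction_on with
    | zero => simp
    | tmul a x => simp [TensorProduct.tmul_smul]
    | add u v hu hv => simp_all [map_add]
  rw [this]

lemma Colin.sum {ι : Type*} (s : Finset ι) {F : ι → (X →ₗ[k] Y)}
    (h : ∀ i ∈ s, Colin k A lX lY (F i)) : Colin k A lX lY (∑ i ∈ s, F i) := by
  classical
  induction s using Finset.induction_on with
  | empty => simpa using Colin.zero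
  | insert _ _ hx ih =>
      rw [Finset.sum_insert hx]
      exact Colin.add (h _ (Finset.mem_insert_self _ _))
        (ih fun i hi => h i (Finset.mem_insert_of_mem hi))

lemma Colin.equivSymm {e : X ≃ₗ[k] Y} (he : Colin k A lX lY e.toLinearMap) :
    Colin k A lY lX e.symm.toLinearMap := by
  unfold Colin at *
  ext y
  have h1 := LinearMap.congr_fun he (e.symm y)
  simp only [LinearMap.comp_apply, LinearEquiv.coe_coe, LinearEquiv.apply_symm_apply] at h1 ⊢
  rw [h1]
  have : ∀ t : A ⊗[k] X, (TensorProduct.map (LinearMap.id) e.symm.toLinearMap)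
      ((TensorProduct.map LinearMap.id e.toLinearMap) t) = t := by
    intro t
    induction t using TensorProduct.induction_on with
    | zero => simp
    | tmul a x => simp
    | add u v hu hv => simp_all [map_add]
  rw [this]

lemma Colin.tmulMap {f : X →ₗ[k] X'} {g : Y →ₗ[k] Y'} (hf : Colin k A lX lX' f)
    (hg : Colin k A lY lY' g) :
    Colin k A (tco k A lX lY) (tco k A lX' lY') (TensorProduct.map f g) := by
  unfold Colin at *
  apply TensorProduct.ext'
  intro x y
  have h1 := LinearMap.congr_fun hf x
  have h2 := LinearMap.congr_fun hg y
  simp only [LinearMap.comp_apply, tco, TensorProduct.map_tmul] at *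
  rw [h1, h2]
  generalize lX x = s
  generalize lY y = t
  induction s using TensorProduct.induction_on with
  | zero => simp
  | add u v hu hv => simp_all [add_tmul, map_add]
  | tmul a x₀ =>
    induction t using TensorProduct.induction_on with
    | zero => simp
    | add u v hu hv => simp_all [tmul_add, map_add]
    | tmul b y₀ => simp

lemma Colin.assoc :
    Colin k A (tco k A (tco k A lX lY) lZ) (tco k A lX (tco k A lY lZ))
      (TensorProduct.assoc k X Y Z).toLinearMap := by
  unfold Colin
  apply TensorProduct.ext_threefold
  intro x y z
  simp only [LinearMap.comp_apply, LinearEquiv.coe_coe, TensorProduct.assoc_tmul, tco,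
    TensorProduct.map_tmul]
  generalize lX x = s
  generalize lY y = t
  generalize lZ z = r
  induction s using TensorProduct.induction_on with
  | zero => simp
  | add u v hu hv => simp_all [add_tmul, map_add]
  | tmul a x₀ =>
    induction t using TensorProduct.induction_on with
    | zero => simp
    | add u v hu hv => simp_all [add_tmul, tmul_add, map_add]
    | tmul b y₀ =>
      induction r using TensorProduct.induction_on with
      | zero => simp
      | add u v hu hv => simp_all [tmul_add, map_add]
      | tmul c z₀ => simp [mul_assoc]

lemma Bico.tmul {rX : X →ₗ[k] X ⊗[k] A} {rY : Y →ₗ[k] Y ⊗[k] A}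
    (hX : Bico k A lX rX) (hY : Bico k A lY rY) :
    Bico k A (tco k A lX lY) (rcoT k A rX rY) := by
  unfold Bico at *
  apply TensorProduct.ext'
  intro x y
  have h1 := LinearMap.congr_fun hX x
  have h2 := LinearMap.congr_fun hY y
  simp only [LinearMap.comp_apply, LinearEquiv.coe_coe] at h1 h2
  simp only [LinearMap.comp_apply, LinearEquiv.coe_coe, rcoT, tco, TensorProduct.map_tmul]
  rw [pwC, pwSL, pwSL, pwT1, TensorProduct.map_tmul, h1, h2]
  rw [pwC', pwSR, pwSR, pwT2, TensorProduct.map_tmul]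
  generalize (TensorProduct.map LinearMap.id rX) (lX x) = u
  generalize (TensorProduct.map LinearMap.id rY) (lY y) = v
  induction u using TensorProduct.induction_on with
  | zero => simp
  | add s t hs ht => simp_all [add_tmul, map_add]
  | tmul a s =>
    induction v using TensorProduct.induction_on with
    | zero => simp
    | add s' t' hs ht => simp_all [tmul_add, map_add]
    | tmul b t =>
      induction s using TensorProduct.induction_on with
      | zero => simp
      | add s' t' hs ht => simp_all [tmul_add, add_tmul, map_add]
      | tmul x0 c =>
        induction t using TensorProduct.induction_on with
        | zero => simp
        | add s' t' hs ht => simp_all [tmul_add, add_tmul, map_add]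
        | tmul y0 d => simp

lemma myCoassoc (a : A) :
    (TensorProduct.map LinearMap.id (ΔA k A)) (ΔA k A a)
      = (TensorProduct.assoc k A A A)
        ((TensorProduct.map (ΔA k A) LinearMap.id) (ΔA k A a)) := by
  simpa [LinearMap.rTensor, LinearMap.lTensor] using (Coalgebra.coassoc_apply (R := k) a).symm

lemma hopfStep (β : V →ₗ[k] A ⊗[k] V) (ℓ : A ⊗[k] V →ₗ[k] V)
    (IH : β.comp ℓ = (TensorProduct.map LinearMap.id ℓ).comp (tco k A (ΔA k A) β)) :
    ((TensorProduct.assoc k A V A).toLinearMap.comp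
        (TensorProduct.map β LinearMap.id)).comp
      ((TensorProduct.map ℓ (μA k A)).comp
        (((TensorProduct.tensorTensorTensorComm k A A V A).toLinearMap).comp
          (TensorProduct.map (ΔA k A) LinearMap.id)))
    = (TensorProduct.map LinearMap.id
        ((TensorProduct.map ℓ (μA k A)).comp
          (((TensorProduct.tensorTensorTensorComm k A A V A).toLinearMap).comp
            (TensorProduct.map (ΔA k A) LinearMap.id)))).comp
      (tco k A (ΔA k A)
        ((TensorProduct.assoc k A V A).toLinearMap.comp
          (TensorProduct.map β LinearMap.id))) := by
  apply TensorProduct.ext'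
  intro a w
  simp only [LinearMap.comp_apply, LinearEquiv.coe_coe, tco, TensorProduct.map_tmul,
    LinearMap.id_coe, id_eq]
  rw [pwML, IH]
  rw [pwSL]
  simp only [tco]
  rw [pwSL, pwSL, pwT1, TensorProduct.map_tmul]
  rw [pwC', pwSR, pwSR, pwT2, TensorProduct.map_tmul]
  simp only [TensorProduct.map_id, LinearMap.id_coe, id_eq]
  rw [myCoassoc]
  generalize (TensorProduct.map (ΔA k A) LinearMap.id) (ΔA k A a) = T
  generalize (TensorProduct.map β LinearMap.id) w = W
  induction T using TensorProduct.induction_on with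
  | zero => simp
  | add s t hs ht => simp_all [add_tmul, map_add]
  | tmul t1 c =>
    induction W using TensorProduct.induction_on with
    | zero => simp
    | add s t hs ht => simp_all [tmul_add, map_add]
    | tmul w1 b =>
      induction t1 using TensorProduct.induction_on with
      | zero => simp
      | add s t hs ht => simp_all [add_tmul, map_add]
      | tmul x y =>
        induction w1 using TensorProduct.induction_on with
        | zero => simp
        | add s t hs ht => simp_all [add_tmul, tmul_add, map_add]
        | tmul n v => simp

end Gen

section Gen2
variable {X Y V M' X' Y' : Type}
  [AddCommGroup X] [Module k X] [AddCommGroup Y] [Module k Y]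
  [AddCommGroup V] [Module k V] [AddCommGroup M'] [Module k M']
  [AddCommGroup X'] [Module k X'] [AddCommGroup Y'] [Module k Y']

/-- The step operator for `lcoBase`. -/
def lext (lY : Y →ₗ[k] A ⊗[k] Y) : Y ⊗[k] A →ₗ[k] A ⊗[k] (Y ⊗[k] A) :=
  ((TensorProduct.assoc k A Y A).toLinearMap).comp
    (TensorProduct.map lY (LinearMap.id : A →ₗ[k] A))

/-- left coaction of `A` on `k` via the unit -/
def unitL : k →ₗ[k] A ⊗[k] k :=
  (TensorProduct.map (Algebra.linearMap k A) (LinearMap.id : k →ₗ[k] k)).comp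
    (TensorProduct.lid k k).symm.toLinearMap

/-- right coaction of `A` on `k` via the unit -/
def unitR : k →ₗ[k] k ⊗[k] A :=
  (TensorProduct.map (LinearMap.id : k →ₗ[k] k) (Algebra.linearMap k A)).comp
    (TensorProduct.rid k k).symm.toLinearMap

variable {k A}

lemma bicoUnit : Bico k A (unitL k A) (unitR k A) := by
  unfold Bico
  ext c
  simp [unitL, unitR, LinearMap.comp_apply, LinearEquiv.coe_coe,
    TensorProduct.lid_symm_apply, TensorProduct.rid_symm_apply, TensorProduct.map_tmul,
    TensorProduct.assoc_symm_tmul, Algebra.linearMap_apply, map_one]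

lemma insBase :
    Colin k A (tco k A (ΔA k A) (unitL k A)) (tco k A (unitL k A) (ΔA k A))
      (TensorProduct.comm k A k).toLinearMap := by
  unfold Colin
  apply TensorProduct.ext'
  intro a c
  simp only [LinearMap.comp_apply, LinearEquiv.coe_coe, tco, unitL,
    TensorProduct.map_tmul, TensorProduct.comm_tmul, TensorProduct.lid_symm_apply,
    Algebra.linearMap_apply, map_one]
  generalize (ΔA k A) a = s
  induction s using TensorProduct.induction_on with
  | zero => simp
  | add u v hu hv => simp_all [add_tmul, tmul_add, map_add]
  | tmul a1 a2 => simp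

lemma insStep {lX : X →ₗ[k] A ⊗[k] X} {lY : Y →ₗ[k] A ⊗[k] Y} {e : A ⊗[k] X ≃ₗ[k] Y}
    (he : Colin k A (tco k A (ΔA k A) lX) lY e.toLinearMap) :
    Colin k A (tco k A (ΔA k A) (tco k A lX (ΔA k A))) (tco k A lY (ΔA k A))
      ((TensorProduct.assoc k A X A).symm.trans
        (TensorProduct.congr e (LinearEquiv.refl k A))).toLinearMap := by
  unfold Colin at *
  apply TensorProduct.ext'
  intro a y
  induction y using TensorProduct.induction_on with
  | zero => simp
  | add u v hu hv => simp_all [TensorProduct.tmul_add, map_add]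
  | tmul w b =>
    have hih := LinearMap.congr_fun he (a ⊗ₜ[k] w)
    simp only [LinearMap.comp_apply, LinearEquiv.coe_coe, tco, TensorProduct.map_tmul] at hih
    simp only [LinearMap.comp_apply, LinearEquiv.coe_coe, LinearEquiv.trans_apply,
      TensorProduct.assoc_symm_tmul, TensorProduct.congr_tmul, LinearEquiv.refl_apply,
      tco, TensorProduct.map_tmul]
    rw [hih]
    generalize (ΔA k A) a = s
    generalize lX w = t
    generalize (ΔA k A) b = r
    induction s using TensorProduct.induction_on with
    | zero => simp
    | add u v hu hv => simp_all [add_tmul, map_add]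
    | tmul a1 a2 =>
      induction t using TensorProduct.induction_on with
      | zero => simp
      | add u v hu hv => simp_all [add_tmul, tmul_add, map_add]
      | tmul x w0 =>
        induction r using TensorProduct.induction_on with
        | zero => simp
        | add u v hu hv => simp_all [tmul_add, map_add]
        | tmul b1 b2 => simp [mul_assoc]

lemma mulLast (lX : X →ₗ[k] A ⊗[k] X) :
    Colin k A (tco k A (tco k A lX (ΔA k A)) (ΔA k A)) (tco k A lX (ΔA k A))
      ((TensorProduct.map (LinearMap.id : X →ₗ[k] X) (μA k A)).comp
        (TensorProduct.assoc k X A A).toLinearMap) := by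
  unfold Colin
  apply TensorProduct.ext_threefold
  intro w a b
  simp only [LinearMap.comp_apply, LinearEquiv.coe_coe, TensorProduct.assoc_tmul,
    TensorProduct.map_tmul, LinearMap.id_coe, id_eq, LinearMap.mul'_apply, tco]
  rw [show (ΔA k A) (a * b) = (ΔA k A) a * (ΔA k A) b from Bialgebra.comul_mul a b]
  generalize lX w = t
  generalize (ΔA k A) a = s
  generalize (ΔA k A) b = r
  induction t using TensorProduct.induction_on with
  | zero => simp
  | add u v hu hv => simp_all [add_tmul, map_add]
  | tmul a0 w0 =>
    induction s using TensorProduct.induction_on with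
    | zero => simp
    | add u v hu hv => simp_all [add_tmul, tmul_add, map_add, mul_add, add_mul]
    | tmul a1 a2 =>
      induction r using TensorProduct.induction_on with
      | zero => simp
      | add u v hu hv => simp_all [tmul_add, map_add, mul_add, add_mul]
      | tmul b1 b2 => simp [Algebra.TensorProduct.tmul_mul_tmul, mul_assoc]

/-- Hopf-module compatibility as colinearity of the action. -/
lemma hopfConv {ω : A ⊗[k] M' →ₗ[k] M'} {ρ : M' →ₗ[k] A ⊗[k] M'}
    (h : IsHopfLL k A ω ρ) : Colin k A (tco k A (ΔA k A) ρ) ρ ω := by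
  unfold IsHopfLL at h
  unfold Colin
  apply TensorProduct.ext'
  intro a m
  have h1 := LinearMap.congr_fun h (a ⊗ₜ[k] m)
  simp only [LinearMap.comp_apply, LinearEquiv.coe_coe, TensorProduct.map_tmul] at h1
  simp only [LinearMap.comp_apply, LinearEquiv.coe_coe, tco, TensorProduct.map_tmul]
  rw [h1]
  generalize (ΔA k A) a = s
  generalize ρ m = t
  induction s using TensorProduct.induction_on with
  | zero => simp
  | add u v hu hv => simp_all [add_tmul, map_add]
  | tmul a1 a2 =>
    induction t using TensorProduct.induction_on with
    | zero => simp
    | add u v hu hv => simp_all [tmul_add, map_add]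
    | tmul x m0 => simp

lemma lastH (lX : X →ₗ[k] A ⊗[k] X) {ω : A ⊗[k] M' →ₗ[k] M'} {ρ : M' →ₗ[k] A ⊗[k] M'}
    (hω : Colin k A (tco k A (ΔA k A) ρ) ρ ω) :
    Colin k A (tco k A (tco k A lX (ΔA k A)) ρ) (tco k A lX ρ)
      ((TensorProduct.map (LinearMap.id : X →ₗ[k] X) ω).comp
        (TensorProduct.assoc k X A M').toLinearMap) := by
  unfold Colin at *
  apply TensorProduct.ext_threefold
  intro w a m
  have h1 := LinearMap.congr_fun hω (a ⊗ₜ[k] m)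
  simp only [LinearMap.comp_apply, LinearEquiv.coe_coe, tco, TensorProduct.map_tmul] at h1
  simp only [LinearMap.comp_apply, LinearEquiv.coe_coe, TensorProduct.assoc_tmul,
    TensorProduct.map_tmul, LinearMap.id_coe, id_eq, tco]
  rw [h1]
  generalize lX w = t
  generalize (ΔA k A) a = s
  generalize ρ m = r
  induction t using TensorProduct.induction_on with
  | zero => simp
  | add u v hu hv => simp_all [add_tmul, map_add]
  | tmul a0 w0 =>
    induction s using TensorProduct.induction_on with
    | zero => simp
    | add u v hu hv => simp_all [add_tmul, tmul_add, map_add]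
    | tmul a1 a2 =>
      induction r using TensorProduct.induction_on with
      | zero => simp
      | add u v hu hv => simp_all [tmul_add, map_add]
      | tmul x m0 => simp [mul_assoc]

lemma pwA2 (f : X →ₗ[k] X') (g : Y →ₗ[k] Y') (h : V →ₗ[k] M')
    (t : (X ⊗[k] Y) ⊗[k] V) :
    (TensorProduct.map f (TensorProduct.map g h)) ((TensorProduct.assoc k X Y V) t)
      = (TensorProduct.assoc k X' Y' M')
        ((TensorProduct.map (TensorProduct.map f g) h) t) := by
  induction t using TensorProduct.induction_on with
  | zero => simp
  | tmul x y =>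
    induction x using TensorProduct.induction_on with
    | zero => simp
    | tmul x1 x2 => simp
    | add u v hu hv => simp_all [add_tmul, map_add]
  | add u v hu hv => simp_all [map_add]

lemma comulTop (β : V →ₗ[k] A ⊗[k] V) :
    Colin k A (lext k A β) (lext k A (lext k A β))
      (((TensorProduct.assoc k V A A).symm.toLinearMap).comp
        (TensorProduct.map (LinearMap.id : V →ₗ[k] V) (ΔA k A))) := by
  unfold Colin
  apply TensorProduct.ext'
  intro v b
  simp only [LinearMap.comp_apply, LinearEquiv.coe_coe, lext, TensorProduct.map_tmul,
    LinearMap.id_coe, id_eq]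
  rw [pwSR, pwA2]
  simp only [TensorProduct.map_tmul, TensorProduct.map_id, LinearMap.id_coe, id_eq]
  generalize (ΔA k A) b = r
  induction r using TensorProduct.induction_on with
  | zero => simp
  | add u v' hu hv => simp_all [tmul_add, map_add]
  | tmul c d =>
    simp only [TensorProduct.assoc_symm_tmul, TensorProduct.assoc_tmul,
      TensorProduct.map_tmul, LinearMap.id_coe, id_eq, LinearMap.comp_apply,
      LinearEquiv.coe_coe]
    generalize β v = U
    induction U using TensorProduct.induction_on with
    | zero => simp
    | add u v' hu hv => simp_all [add_tmul, map_add]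
    | tmul x v0 => simp

lemma sideStep {β : V →ₗ[k] A ⊗[k] V} {β' : X →ₗ[k] A ⊗[k] X} {g : V →ₗ[k] X}
    (hg : Colin k A β β' g) :
    Colin k A (lext k A β) (lext k A β')
      (TensorProduct.map g (LinearMap.id : A →ₗ[k] A)) := by
  unfold Colin at *
  apply TensorProduct.ext'
  intro v b
  have h1 := LinearMap.congr_fun hg v
  simp only [LinearMap.comp_apply, LinearEquiv.coe_coe] at h1
  simp only [LinearMap.comp_apply, LinearEquiv.coe_coe, lext, TensorProduct.map_tmul,
    LinearMap.id_coe, id_eq]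
  rw [h1]
  generalize β v = U
  induction U using TensorProduct.induction_on with
  | zero => simp
  | add u v' hu hv => simp_all [add_tmul, map_add]
  | tmul x v0 => simp

lemma rho0 {ρl : V →ₗ[k] A ⊗[k] V} {ρr : V →ₗ[k] V ⊗[k] A} (hb : Bico k A ρl ρr) :
    Colin k A ρl (lext k A ρl) ρr := by
  unfold Colin
  ext v
  have h1 := LinearMap.congr_fun hb v
  simp only [LinearMap.comp_apply, LinearEquiv.coe_coe] at h1
  simp only [LinearMap.comp_apply, LinearEquiv.coe_coe, lext]
  rw [h1]
  simp

lemma rcoStep {lX : X →ₗ[k] A ⊗[k] X} {rX : X →ₗ[k] X ⊗[k] A} {lY : Y →ₗ[k] A ⊗[k] Y}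
    {f : X →ₗ[k] Y} (hb : Bico k A lX rX) (hf : Colin k A lX lY f) :
    Colin k A lX (lext k A lY)
      ((TensorProduct.map f (LinearMap.id : A →ₗ[k] A)).comp rX) := by
  unfold Colin at *
  ext x
  have h1 := LinearMap.congr_fun hb x
  simp only [LinearMap.comp_apply, LinearEquiv.coe_coe] at h1
  simp only [LinearMap.comp_apply, LinearEquiv.coe_coe, lext]
  rw [pwML, hf, pwSL, h1, pwSR]
  generalize (TensorProduct.map LinearMap.id rX) (lX x) = t
  induction t using TensorProduct.induction_on with
  | zero => simp
  | add s t hs ht => simp_all [map_add]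
  | tmul a y =>
    induction y using TensorProduct.induction_on with
    | zero => simp
    | add s t hs ht => simp_all [tmul_add, map_add]
    | tmul x1 c => simp

lemma mcC (f : X →ₗ[k] X') (g : Y →ₗ[k] Y') :
    (TensorProduct.map f (LinearMap.id : Y' →ₗ[k] Y')).comp
        (TensorProduct.map (LinearMap.id : X →ₗ[k] X) g)
      = TensorProduct.map f g := by
  apply TensorProduct.ext'
  intro x y
  simp

lemma congrMap (e : V ≃ₗ[k] X) (f : Y →ₗ[k] V) :
    (TensorProduct.congr e (LinearEquiv.refl k A)).toLinearMap.comp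
        (TensorProduct.map f (LinearMap.id : A →ₗ[k] A))
      = TensorProduct.map (e.toLinearMap.comp f) (LinearMap.id : A →ₗ[k] A) := by
  apply TensorProduct.ext'
  intro y a
  simp

end Gen2

section Ctx

lemma colin_congr {X Y : Type} [AddCommGroup X] [Module k X] [AddCommGroup Y] [Module k Y]
    {lX : X →ₗ[k] A ⊗[k] X} {lY : Y →ₗ[k] A ⊗[k] Y} {f g : X →ₗ[k] Y}
    (hf : Colin k A lX lY f) (h : f = g) : Colin k A lX lY g := h ▸ hf

lemma dL_succ (n : ℕ) : dL k A (n+1) = tco k A (dL k A n) (ΔA k A) := rfl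

lemma dR_succ (n : ℕ) : dR k A (n+1) = rcoT k A (dR k A n) (ΔA k A) := rfl

lemma lcoDm_eq {M : Type} [AddCommGroup M] [Module k M] (ρMl : M →ₗ[k] A ⊗[k] M) (n : ℕ) :
    lcoDm k A ρMl n = tco k A (dL k A n) ρMl := rfl

lemma lcoBase_succ {N : Type} [AddCommGroup N] [Module k N] (ρNl : N →ₗ[k] A ⊗[k] N)
    (p : ℕ) : lcoBase k A ρNl (p+1) = lext k A (lcoBase k A ρNl p) := rfl

lemma bicoA : Bico k A (ΔA k A) (ΔA k A) := by
  unfold Bico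
  ext a
  simp only [LinearMap.comp_apply, LinearEquiv.coe_coe]
  rw [myCoassoc, LinearEquiv.symm_apply_apply]

lemma bicoPk : ∀ n : ℕ, Bico k A (dL k A n) (dR k A n)
  | 0 => bicoUnit
  | n + 1 => by
      rw [dL_succ, dR_succ]
      exact Bico.tmul (bicoPk n) (bicoA k A)

lemma bico_of_isBicomodule {M : Type} [AddCommGroup M] [Module k M]
    {ρMl : M →ₗ[k] A ⊗[k] M} {ρM : M →ₗ[k] M ⊗[k] A}
    (h : IsBicomodule k A ρMl ρM) : Bico k A ρMl ρM := by
  unfold Bico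
  ext m
  have h1 := LinearMap.congr_fun h m
  simp only [LinearMap.comp_apply, LinearEquiv.coe_coe] at h1 ⊢
  rw [h1, LinearEquiv.symm_apply_apply]

lemma dLmul (n i : ℕ) : Colin k A (dL k A (n+1)) (dL k A n) (mulP k A n i) := by
  induction n with
  | zero => exact Colin.zero
  | succ n ih =>
    show Colin k A (dL k A (n+2)) (dL k A (n+1)) (mulP k A (n+1) i)
    unfold mulP
    by_cases hi : i = n + 1
    · rw [dL_succ, dL_succ]
      exact colin_congr k A (mulLast (dL k A n)) (if_pos hi).symm
    · rw [dL_succ, dL_succ]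
      exact colin_congr k A (Colin.tmulMap ih Colin.lid) (if_neg hi).symm

lemma dLins : ∀ n : ℕ,
    Colin k A (tco k A (ΔA k A) (dL k A n)) (dL k A (n+1)) (insP k A n).toLinearMap
  | 0 => by
      rw [dL_succ]
      exact insBase
  | n + 1 => by
      rw [dL_succ, dL_succ]
      exact insStep (dLins n)

lemma hopfLdiag {N : Type} [AddCommGroup N] [Module k N]
    {ωN : A ⊗[k] N →ₗ[k] N} {ρNl : N →ₗ[k] A ⊗[k] N} (h : IsHopfLL k A ωN ρNl) :
    ∀ p : ℕ, Colin k A (tco k A (ΔA k A) (lcoBase k A ρNl p)) (lcoBase k A ρNl p)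
      (ldiag k A ωN p)
  | 0 => hopfConv h
  | p + 1 => by
      have ih := hopfLdiag h p
      unfold Colin at ih ⊢
      exact hopfStep _ _ ih

lemma comulAtColin {N : Type} [AddCommGroup N] [Module k N] (ρNl : N →ₗ[k] A ⊗[k] N) :
    ∀ (p i : ℕ), Colin k A (lcoBase k A ρNl p) (lcoBase k A ρNl (p+1)) (comulAt k A p i)
  | 0, _ => Colin.zero
  | p + 1, i => by
      unfold comulAt
      by_cases hi : i = p + 1
      · rw [lcoBase_succ, lcoBase_succ]
        exact colin_congr k A (comulTop (lcoBase k A ρNl p)) (if_pos hi).symm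
      · rw [lcoBase_succ, lcoBase_succ]
        exact colin_congr k A (sideStep (comulAtColin ρNl p i)) (if_neg hi).symm

lemma rshift {N : Type} [AddCommGroup N] [Module k N]
    {ρNl : N →ₗ[k] A ⊗[k] N} {ρN : N →ₗ[k] N ⊗[k] A} (hb : IsBicomodule k A ρNl ρN) :
    ∀ p : ℕ, Colin k A (lcoBase k A ρNl p) (lcoBase k A ρNl (p+1))
      ((shiftB k A p).toLinearMap.comp (rhoBase k A ρN p))
  | 0 => by
      have h0 := rho0 (bico_of_isBicomodule k A hb)
      refine colin_congr k A h0 ?_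
      rw [show (shiftB k A (N := N) 0).toLinearMap = LinearMap.id from rfl]
      rfl
  | p + 1 => by
      rw [lcoBase_succ, lcoBase_succ]
      refine colin_congr k A (sideStep (rshift hb p)) ?_
      exact (congrMap (shiftB k A p) (rhoBase k A ρN p)).symm

lemma cofLast_eq {M N : Type} [AddCommGroup M] [Module k M] [AddCommGroup N] [Module k N]
    (ρM : M →ₗ[k] M ⊗[k] A) (n p : ℕ) (f : Yc k A M N n p) :
    (TensorProduct.map f (LinearMap.id : A →ₗ[k] A)).comp
        (rcoT k A (dR k A n) ρM) = cofLast k A ρM n p f := by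
  unfold cofLast rcoT
  rw [← LinearMap.comp_assoc, mcC]

end Ctx

/-- For `M, N` in `A_l^{lr}`, the subspaces
`L^{n,p}(M,N) = Hom^{A-comod}(A^{⊗n} ⊗ M, N ⊗ A^{⊗p})` of left `A`-colinear maps are
preserved by the differentials of the Hopf-module bicomplex, so
`(L^{n,p}(M,N), d_m, d_c)` is a double complex. -/
theorem left_colinear_preserved (k : Type) [Field k] (A : Type) [Ring A] [Bialgebra k A]
    (M N : Type) [AddCommGroup M] [Module k M] [AddCommGroup N] [Module k N]
    (ωM : A ⊗[k] M →ₗ[k] M) (ρMl : M →ₗ[k] A ⊗[k] M) (ρM : M →ₗ[k] M ⊗[k] A)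
    (ωN : A ⊗[k] N →ₗ[k] N) (ρNl : N →ₗ[k] A ⊗[k] N) (ρN : N →ₗ[k] N ⊗[k] A)
    (hM : IsLLRObject k A ωM ρMl ρM) (hN : IsLLRObject k A ωN ρNl ρN)
    (n p : ℕ) (f : Yc k A M N n p)
    (hf : IsLeftColinear k A ρMl ρNl n p f) :
    IsLeftColinear k A ρMl ρNl (n+1) p (dmH k A ωM ωN n p f) ∧
    IsLeftColinear k A ρMl ρNl n (p+1) (dcH k A ρM ρN n p f) := by
  obtain ⟨hMmod, hMcoL, hMcoR, hMbi, hMhopf, hMlr⟩ := hM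
  obtain ⟨hNmod, hNcoL, hNcoR, hNbi, hNhopf, hNlr⟩ := hN
  have hfC : Colin k A (lcoDm k A ρMl n) (lcoBase k A ρNl p) f := hf
  constructor
  · show Colin k A (lcoDm k A ρMl (n+1)) (lcoBase k A ρNl p) _
    unfold dmH
    apply Colin.sum
    intro i _
    apply Colin.zsmul
    unfold bH
    split_ifs with h0 hn
    · -- face0
      unfold face0
      have c1 : Colin k A (lcoDm k A ρMl (n+1))
          (tco k A (tco k A (ΔA k A) (dL k A n)) ρMl)
          (TensorProduct.map (insP k A n).symm.toLinearMap (LinearMap.id : M →ₗ[k] M)) := by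
        rw [lcoDm_eq, dL_succ]
        exact Colin.tmulMap (Colin.equivSymm (dLins k A n)) Colin.lid
      have c2 : Colin k A (tco k A (tco k A (ΔA k A) (dL k A n)) ρMl)
          (tco k A (ΔA k A) (tco k A (dL k A n) ρMl))
          (TensorProduct.assoc k A (Pk k A n) M).toLinearMap := Colin.assoc
      have c3 : Colin k A (tco k A (ΔA k A) (lcoDm k A ρMl n))
          (tco k A (ΔA k A) (lcoBase k A ρNl p))
          (TensorProduct.map (LinearMap.id : A →ₗ[k] A) f) := Colin.tmulMap Colin.lid hfC
      have c4 := hopfLdiag k A hNhopf p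
      exact ((c1.comp c2).comp c3).comp c4
    · -- faceMid
      unfold faceMid
      refine Colin.comp ?_ hfC
      rw [lcoDm_eq, lcoDm_eq]
      exact Colin.tmulMap (dLmul k A n i) Colin.lid
    · -- faceLastH
      unfold faceLastH
      refine Colin.comp ?_ hfC
      rw [lcoDm_eq, lcoDm_eq, dL_succ]
      exact lastH (dL k A n) (hopfConv hMhopf)
  · show Colin k A (lcoDm k A ρMl n) (lcoBase k A ρNl (p+1)) _
    unfold dcH
    apply Colin.sum
    intro j _
    apply Colin.zsmul
    unfold cH
    split_ifs with h0 hp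
    · -- cof0H
      unfold cof0H
      exact colin_congr k A (Colin.comp hfC (rshift k A hNbi p)) rfl
    · -- comulAt
      exact Colin.comp hfC (comulAtColin k A ρNl p j)
    · -- cofLast
      have hb : Bico k A (lcoDm k A ρMl n) (rcoT k A (dR k A n) ρM) := by
        rw [lcoDm_eq]
        exact Bico.tmul (bicoPk k A n) (bico_of_isBicomodule k A hMbi)
      rw [lcoBase_succ]
      exact colin_congr k A (rcoStep hb hfC) (cofLast_eq k A ρM n p f)

end PS
end
end
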